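/- arXiv:2411.04447 — 4 statements merged into one kernel-verified Lean document; each statement's English description precedes it below -/
import Mathlib

section
/- Let p be an odd prime, m ≥ 2 an integer, and let s be an integer with 0 ≤ s ≤ m such that m+s ≥ 3. Let f : F_q → F_p be a weakly regular s-plateaued function with f(0) = 0. Then the linear code C̄_f is self-orthogonal, that is, C̄_f ⊆ C̄_f^⊥. -/
open Finset

noncomputable section

/-- ζ_p = exp(2πi/p). -/
def zetaP (p : ℕ) : ℂ := Complex.exp (2 * Real.pi * Complex.I / p)

/-- ζ_p^a for a ∈ F_p. -/
def eChar (p : ℕ) (a : ZMod p) : ℂ := zetaP p ^ a.val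

/-- Walsh transform of f : F_q → F_p : W_f(β) = Σ_x ζ_p^{f(x) − Tr(βx)}. -/
def walsh (p : ℕ) (F : Type) [Field F] [Fintype F] [Algebra (ZMod p) F]
    (f : F → ZMod p) (β : F) : ℂ :=
  ∑ x : F, eChar p (f x - Algebra.trace (ZMod p) F (β * x))

/-- √p* = √p if p ≡ 1 (mod 4), and i√p if p ≡ 3 (mod 4). -/
def sqrtPStar (p : ℕ) : ℂ :=
  if p % 4 = 1 then ((Real.sqrt p : ℝ) : ℂ) else Complex.I * ((Real.sqrt p : ℝ) : ℂ)

/-- f is s-plateaued: |W_f(β)|² ∈ {0, p^{m+s}} for all β. -/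
def IsPlateaued (p m s : ℕ) (F : Type) [Field F] [Fintype F] [Algebra (ZMod p) F]
    (f : F → ZMod p) : Prop :=
  ∀ β : F, Complex.normSq (walsh p F f β) = 0 ∨
    Complex.normSq (walsh p F f β) = (p : ℝ) ^ (m + s)

/-- Walsh support S_f = {β : |W_f(β)|² = p^{m+s}}. -/
def walshSupp (p m s : ℕ) (F : Type) [Field F] [Fintype F] [Algebra (ZMod p) F]
    (f : F → ZMod p) : Set F :=
  {β : F | Complex.normSq (walsh p F f β) = (p : ℝ) ^ (m + s)}

/-- f is weakly regular s-plateaued with sign ε and dual function f^*. -/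
def IsWeaklyRegularPlateaued (p m s : ℕ) (F : Type) [Field F] [Fintype F]
    [Algebra (ZMod p) F] (f : F → ZMod p) (ε : ℤ) (fstar : F → ZMod p) : Prop :=
  IsPlateaued p m s F f ∧ (ε = 1 ∨ ε = -1) ∧
  (∀ β : F, β ∉ walshSupp p m s F f → fstar β = 0) ∧
  (∀ β ∈ walshSupp p m s F f,
    walsh p F f β = (ε : ℂ) * sqrtPStar p ^ (m + s) * eChar p (fstar β))

/-- Walsh transform of a Boolean function, with values in ℤ. -/
def walsh2 (F : Type) [Field F] [Fintype F] [Algebra (ZMod 2) F]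
    (f : F → ZMod 2) (β : F) : ℤ :=
  ∑ x : F, (-1 : ℤ) ^ ((f x + Algebra.trace (ZMod 2) F (β * x)).val)

/-- A Boolean function is s-plateaued: W_f(β)² ∈ {0, 2^{m+s}} for all β. -/
def IsPlateaued2 (m s : ℕ) (F : Type) [Field F] [Fintype F] [Algebra (ZMod 2) F]
    (f : F → ZMod 2) : Prop :=
  ∀ β : F, walsh2 F f β ^ 2 = 0 ∨ walsh2 F f β ^ 2 = 2 ^ (m + s)

/-- Hamming weight. -/
def wtH {n : Type} [Fintype n] {K : Type} [Zero K] [DecidableEq K] (v : n → K) : ℕ :=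
  (Finset.univ.filter (fun i => v i ≠ 0)).card

/-- A code S has minimum distance d. -/
def hasMinDist {n : Type} [Fintype n] {K : Type} [Zero K] [DecidableEq K]
    (S : Set (n → K)) (d : ℕ) : Prop :=
  (∃ v ∈ S, v ≠ 0 ∧ wtH v = d) ∧ ∀ v ∈ S, v ≠ 0 → d ≤ wtH v

/-- The dual code of a set of vectors. -/
def dualCode {n : Type} [Fintype n] {K : Type} [Field K] (S : Set (n → K)) :
    Submodule K (n → K) where
  carrier := {u : n → K | ∀ v ∈ S, ∑ i, u i * v i = 0}
  add_mem' := by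
    intro u w hu hw v hv
    have h1 := hu v hv
    have h2 := hw v hv
    simp only [Pi.add_apply, add_mul, Finset.sum_add_distrib, h1, h2, add_zero]
  zero_mem' := by
    intro v hv
    simp
  smul_mem' := by
    intro c u hu v hv
    have h1 := hu v hv
    simp only [Pi.smul_apply, smul_eq_mul, mul_assoc, ← Finset.mul_sum, h1, mul_zero]

/-- The code C̄_f = {(a f(x) + Tr(bx) + c)_{x ∈ F_q}}. -/
def codeCbar (p : ℕ) (F : Type) [Field F] [Fintype F] [Algebra (ZMod p) F]
    (f : F → ZMod p) : Set (F → ZMod p) :=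
  {v : F → ZMod p | ∃ a c : ZMod p, ∃ b : F,
    v = fun x => a * f x + Algebra.trace (ZMod p) F (b * x) + c}

/-- The extended code C̄_f' ⊆ F_p^{m+2+q}: all vectors
(c, a, a_0, …, a_{m−1}, (a f(x) + Tr(bx) + a + c)_{x ∈ F_q}) with b = Σ a_i α^i. -/
def extCode (p m : ℕ) (F : Type) [Field F] [Fintype F] [Algebra (ZMod p) F]
    (f : F → ZMod p) (α : F) : Set (Fin (m + 2) ⊕ F → ZMod p) :=
  {v | ∃ c a : ZMod p, ∃ aa : Fin m → ZMod p,
    v = Sum.elim (Fin.cons c (Fin.cons a aa))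
      (fun x => a * f x +
        Algebra.trace (ZMod p) F ((∑ i : Fin m, aa i • α ^ (i : ℕ)) * x) + a + c)}

/-- The punctured code C_f^* indexed by the nonzero elements of F_q. -/
def codeCstar (p : ℕ) (F : Type) [Field F] [Fintype F] [Algebra (ZMod p) F]
    (f : F → ZMod p) : Set ({x : F // x ≠ 0} → ZMod p) :=
  {v | ∃ a : ZMod p, ∃ b : F,
    v = fun x => a * f x.val + Algebra.trace (ZMod p) F (b * x.val)}

end

-- ## Auxiliary lemmas for statement4

open Polynomial

theorem zetaP_prim (p : ℕ) [Fact p.Prime] : IsPrimitiveRoot (zetaP p) p := by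
  have := Complex.isPrimitiveRoot_exp p (Nat.Prime.ne_zero Fact.out)
  exact this

theorem zetaP_pow_p (p : ℕ) [Fact p.Prime] : zetaP p ^ p = 1 := (zetaP_prim p).pow_eq_one

theorem eChar_add (p : ℕ) [Fact p.Prime] (a b : ZMod p) :
    eChar p (a + b) = eChar p a * eChar p b := by
  have h := zetaP_pow_p p
  rw [eChar, eChar, eChar, ← pow_add, ZMod.val_add, ← pow_eq_pow_mod _ h]

theorem eChar_zero (p : ℕ) [Fact p.Prime] : eChar p 0 = 1 := by
  simp [eChar, ZMod.val_zero]

theorem eChar_eq_one_iff (p : ℕ) [Fact p.Prime] (a : ZMod p) : eChar p a = 1 ↔ a = 0 := by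
  constructor
  · intro h
    have hd := (zetaP_prim p).pow_eq_one_iff_dvd a.val |>.mp h
    have hlt : a.val < p := ZMod.val_lt a
    have hv : a.val = 0 := Nat.eq_zero_of_dvd_of_lt hd hlt
    exact (ZMod.val_eq_zero a).mp hv
  · intro h; rw [h]; exact eChar_zero p

theorem indep_aux (p : ℕ) [Fact p.Prime] {ζ : ℂ} (hprim : IsPrimitiveRoot ζ p) (c : ℕ → ℤ)
    (h : ∑ i ∈ range (p - 1), (c i : ℂ) * ζ ^ i = 0) : ∀ i ∈ range (p - 1), c i = 0 := by
  have hp : p.Prime := Fact.out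
  by_contra hcon
  push_neg at hcon
  obtain ⟨i0, hi0, hci0⟩ := hcon
  set P : ℚ[X] := ∑ i ∈ range (p - 1), C (c i : ℚ) * X ^ i with hP
  have hcoeff : ∀ k ∈ range (p - 1), P.coeff k = (c k : ℚ) := by
    intro k hk
    rw [hP, finset_sum_coeff]
    simp only [coeff_C_mul, coeff_X_pow]
    rw [Finset.sum_eq_single k]
    · simp
    · intro b _ hb; simp [Ne.symm hb]
    · intro hk'; exact absurd hk hk'
  have hPne : P ≠ 0 := by
    intro h0
    apply hci0
    have := hcoeff i0 hi0
    rw [h0] at this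
    simpa using this.symm
  have haeval : aeval ζ P = 0 := by
    rw [hP]
    simp only [map_sum, map_mul, aeval_C, aeval_X_pow]
    exact h
  have hdeg : P.degree < (p - 1 : ℕ) := by
    apply lt_of_le_of_lt (degree_sum_le _ _)
    rw [Finset.sup_lt_iff (by exact_mod_cast WithBot.bot_lt_coe _)]
    intro i hi
    calc (C (c i : ℚ) * X ^ i).degree ≤ (i : WithBot ℕ) := degree_C_mul_X_pow_le _ _
    _ < ((p-1 : ℕ) : WithBot ℕ) := by exact_mod_cast mem_range.mp hi
  have hmin : (minpoly ℚ ζ).degree ≤ P.degree :=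
    minpoly.degree_le_of_ne_zero ℚ ζ hPne haeval
  have hcyc : cyclotomic p ℚ = minpoly ℚ ζ := cyclotomic_eq_minpoly_rat hprim hp.pos
  rw [← hcyc, degree_cyclotomic, Nat.totient_prime hp] at hmin
  exact absurd (lt_of_le_of_lt hmin hdeg) (lt_irrefl _)

theorem indep (p : ℕ) [Fact p.Prime] (d : ZMod p → ℤ) (h : ∑ j : ZMod p, (d j : ℂ) * eChar p j = 0) :
    ∀ j k : ZMod p, d j = d k := by
  have hp : p.Prime := Fact.out
  have hprim : IsPrimitiveRoot (zetaP p) p := Complex.isPrimitiveRoot_exp p hp.ne_zero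
  have hp1 : 1 < p := hp.one_lt
  set ζ := zetaP p
  have hre : ∑ i ∈ range p, (d (i : ZMod p) : ℂ) * ζ ^ i = 0 := by
    rw [← h]
    refine Finset.sum_nbij' (fun i => ((i : ℕ) : ZMod p)) (fun j => j.val) ?_ ?_ ?_ ?_ ?_
    · intro i _; exact mem_univ _
    · intro j _; exact mem_range.mpr (ZMod.val_lt j)
    · intro i hi; simp [ZMod.val_natCast_of_lt (mem_range.mp hi)]
    · intro j _; simp [ZMod.natCast_val, ZMod.cast_id]
    · intro i hi
      rw [eChar, ZMod.val_natCast_of_lt (mem_range.mp hi)]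
  set e : ℕ → ℤ := fun i => d (i : ZMod p) - d ((p - 1 : ℕ) : ZMod p) with he
  have hgeom : ∑ i ∈ range p, ζ ^ i = 0 := hprim.geom_sum_eq_zero hp1
  have hsum2 : ∑ i ∈ range p, (e i : ℂ) * ζ ^ i = 0 := by
    push_cast [he]
    simp only [sub_mul, Finset.sum_sub_distrib, hre]
    rw [← Finset.mul_sum, hgeom]
    ring
  have hrs : range p = insert (p - 1) (range (p - 1)) := by
    conv_lhs => rw [show p = (p - 1) + 1 from (Nat.succ_pred_eq_of_pos hp.pos).symm]
    rw [Finset.range_add_one]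
  have hsum3 : ∑ i ∈ range (p - 1), (e i : ℂ) * ζ ^ i = 0 := by
    rw [hrs, Finset.sum_insert (by simp)] at hsum2
    simpa [he] using hsum2
  have hz := indep_aux p hprim e hsum3
  -- all d values are equal to d ((p-1 : ℕ) : ZMod p)
  have hall : ∀ j : ZMod p, d j = d ((p - 1 : ℕ) : ZMod p) := by
    intro j
    by_cases hj : j = ((p - 1 : ℕ) : ZMod p)
    · rw [hj]
    · have hjv : j.val ∈ range (p - 1) := by
        rw [mem_range]
        rcases Nat.lt_or_ge j.val (p - 1) with h' | h'
        · exact h'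
        · exfalso; apply hj
          have : j.val = p - 1 := le_antisymm (Nat.le_pred_of_lt (ZMod.val_lt j)) h'
          rw [← this]; simp [ZMod.natCast_val, ZMod.cast_id]
      have := hz j.val hjv
      have hjj : ((j.val : ℕ) : ZMod p) = j := by simp [ZMod.natCast_val, ZMod.cast_id]
      rw [he] at this
      simp only [hjj] at this
      linarith [this]
  intro j k; rw [hall j, hall k]

theorem fiber_dvd (p m : ℕ) [Fact p.Prime] (hm : 2 ≤ m) {F : Type} [Fintype F] [DecidableEq F]
    (G : F → ZMod p) (hcard : Fintype.card F = p ^ m) (c : ZMod p → ℤ)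
    (hc : ∑ x : F, eChar p (G x) = (p : ℂ) * ∑ j : ZMod p, (c j : ℂ) * eChar p j)
    (hcs : (p : ℤ) ∣ ∑ j : ZMod p, c j) :
    ∀ j : ZMod p, (p : ℤ) ∣ ((univ.filter (fun x => G x = j)).card : ℤ) := by
  have hp : p.Prime := Fact.out
  set N : ZMod p → ℕ := fun j => (univ.filter (fun x => G x = j)).card with hN
  have hfib : ∑ x : F, eChar p (G x) = ∑ j : ZMod p, (N j : ℂ) * eChar p j := by
    rw [← Finset.sum_fiberwise' univ G (fun j => eChar p j)]
    refine Finset.sum_congr rfl fun j _ => ?_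
    rw [Finset.sum_const, nsmul_eq_mul, hN]
  set d : ZMod p → ℤ := fun j => (N j : ℤ) - p * c j with hd
  have hzero : ∑ j : ZMod p, (d j : ℂ) * eChar p j = 0 := by
    simp only [hd]
    push_cast
    simp only [sub_mul, Finset.sum_sub_distrib]
    rw [← hfib, hc, Finset.mul_sum]
    ring_nf
  have hconst := indep p d hzero
  have hsumN : ∑ j : ZMod p, (N j : ℤ) = (p : ℤ) ^ m := by
    have := Finset.card_eq_sum_card_fiberwise (fun x (_ : x ∈ univ) => Finset.mem_univ (G x))
    have h1 : ∑ j : ZMod p, N j = p ^ m := by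
      rw [← this]; exact hcard
    exact_mod_cast h1
  have hsumd : ∑ j : ZMod p, d j = (p : ℤ) * d 0 := by
    rw [Finset.sum_congr rfl fun j _ => hconst j 0]
    rw [Finset.sum_const, Finset.card_univ, ZMod.card, nsmul_eq_mul]
  have hsumd2 : ∑ j : ZMod p, d j = (p : ℤ) ^ m - p * ∑ j : ZMod p, c j := by
    simp only [hd, Finset.sum_sub_distrib, hsumN, Finset.mul_sum]
  have hd0 : (p : ℤ) ∣ d 0 := by
    have hpm : (p : ℤ) * d 0 = (p : ℤ) ^ m - p * ∑ j : ZMod p, c j := by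
      rw [← hsumd, hsumd2]
    have hpne : (p : ℤ) ≠ 0 := by exact_mod_cast hp.ne_zero
    obtain ⟨t, ht⟩ := hcs
    have h2 : (p : ℤ) ^ 2 ∣ (p : ℤ) * d 0 := by
      rw [hpm, ht]
      apply dvd_sub
      · exact_mod_cast pow_dvd_pow (p : ℤ) hm
      · exact ⟨t, by ring⟩
    rw [pow_two] at h2
    obtain ⟨u, hu⟩ := h2
    rw [mul_assoc] at hu
    have := mul_left_cancel₀ hpne hu
    exact ⟨u, this⟩
  intro j
  have : d j = d 0 := hconst j 0
  have hNj : (N j : ℤ) = d j + p * c j := by simp [hd]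
  rw [hNj, this]
  exact dvd_add hd0 ⟨c j, rfl⟩

theorem sqrtPStar_sq (p : ℕ) (hp2 : p ≠ 2) [Fact p.Prime] :
    sqrtPStar p ^ 2 = (((if p % 4 = 1 then (p : ℤ) else -p) : ℤ) : ℂ) := by
  have hge : (0:ℝ) ≤ (p:ℝ) := Nat.cast_nonneg p
  have hs : ((Real.sqrt p : ℝ) : ℂ) ^ 2 = (p : ℂ) := by
    rw [← Complex.ofReal_pow, Real.sq_sqrt hge]
    norm_num
  by_cases h : p % 4 = 1
  · simp [sqrtPStar, h, hs]
  · simp only [sqrtPStar, h, if_false]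
    push_cast
    rw [mul_pow, Complex.I_sq, hs]
    ring

theorem gauss_rep (p : ℕ) [Fact p.Prime] (hp2 : p ≠ 2) :
    ∃ σ : ℤ, (σ = 1 ∨ σ = -1) ∧
      sqrtPStar p = (σ : ℂ) * ∑ a : ZMod p, ((quadraticChar (ZMod p) a : ℤ) : ℂ) * eChar p a := by
  have hp : p.Prime := Fact.out
  have hprim : IsPrimitiveRoot (zetaP p) p := Complex.isPrimitiveRoot_exp p hp.ne_zero
  have hpow : zetaP p ^ p = 1 := hprim.pow_eq_one
  have hrc : ringChar (ZMod p) ≠ 2 := by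
    rw [ZMod.ringChar_zmod_n]; exact hp2
  set ψ : AddChar (ZMod p) ℂ := AddChar.zmodChar p ((IsPrimitiveRoot.iff_def _ p).mp hprim).left with hψ
  have hψprim : ψ.IsPrimitive := AddChar.zmodChar_primitive_of_primitive_root p hprim
  set χ : MulChar (ZMod p) ℂ := (quadraticChar (ZMod p)).ringHomComp (Int.castRingHom ℂ) with hχ
  have hχ1 : χ ≠ 1 := (MulChar.ringHomComp_ne_one_iff (RingHom.injective_int _)).mpr
    (quadraticChar_ne_one hrc)
  have hχ2 : χ.IsQuadratic := (quadraticChar_isQuadratic (ZMod p)).comp _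
  have hg2 : gaussSum χ ψ ^ 2 = χ (-1) * Fintype.card (ZMod p) := gaussSum_sq hχ1 hχ2 hψprim
  have hmod : p % 4 = 1 ∨ p % 4 = 3 := by
    have := hp.two_le
    have hodd : p % 2 = 1 := hp.eq_two_or_odd.resolve_left hp2
    omega
  have hneg : χ (-1) = (((if p % 4 = 1 then (p : ℤ) else -p) : ℤ) : ℂ) / p := by
    rw [hχ]
    rw [MulChar.ringHomComp_apply]
    rw [quadraticChar_neg_one hrc, ZMod.card]
    have hpne : (p : ℂ) ≠ 0 := by
      exact_mod_cast hp.ne_zero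
    rcases hmod with h | h
    · rw [ZMod.χ₄_nat_one_mod_four h, if_pos h]
      push_cast
      field_simp
      simp
    · rw [ZMod.χ₄_nat_three_mod_four h, if_neg (by omega)]
      push_cast
      field_simp
      simp
  have hpne : (p : ℂ) ≠ 0 := by exact_mod_cast hp.ne_zero
  have hg2' : gaussSum χ ψ ^ 2 = (((if p % 4 = 1 then (p : ℤ) else -p) : ℤ) : ℂ) := by
    rw [hg2, hneg, ZMod.card]
    field_simp
  have hsq : sqrtPStar p ^ 2 = gaussSum χ ψ ^ 2 := by
    rw [hg2', sqrtPStar_sq p hp2]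
  have hfac : (sqrtPStar p - gaussSum χ ψ) * (sqrtPStar p + gaussSum χ ψ) = 0 := by
    have : sqrtPStar p ^ 2 - gaussSum χ ψ ^ 2 = 0 := by rw [hsq]; ring
    calc (sqrtPStar p - gaussSum χ ψ) * (sqrtPStar p + gaussSum χ ψ)
        = sqrtPStar p ^ 2 - gaussSum χ ψ ^ 2 := by ring
      _ = 0 := this
  have hgs : gaussSum χ ψ = ∑ a : ZMod p, ((quadraticChar (ZMod p) a : ℤ) : ℂ) * eChar p a := by
    unfold gaussSum
    refine Finset.sum_congr rfl fun a _ => ?_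
    rw [hχ, MulChar.ringHomComp_apply, hψ, AddChar.zmodChar_apply]
    rfl
  rcases mul_eq_zero.mp hfac with h | h
  · exact ⟨1, Or.inl rfl, by rw [← hgs]; push_cast; linear_combination h⟩
  · exact ⟨-1, Or.inr rfl, by rw [← hgs]; push_cast; linear_combination h⟩

theorem walsh_rep (p m s : ℕ) [Fact p.Prime] (hp2 : p ≠ 2) (hms : 3 ≤ m + s)
    (F : Type) [Field F] [Fintype F] [Algebra (ZMod p) F]
    (f : F → ZMod p) (ε : ℤ) (fstar : F → ZMod p)
    (hwr : IsWeaklyRegularPlateaued p m s F f ε fstar) (β : F) :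
    ∃ c : ZMod p → ℤ, walsh p F f β = (p : ℂ) * ∑ j : ZMod p, (c j : ℂ) * eChar p j ∧
      (p : ℤ) ∣ ∑ j : ZMod p, c j := by
  obtain ⟨hplat, -, -, hval⟩ := hwr
  rcases hplat β with h0 | hsup
  · refine ⟨0, ?_, by simp⟩
    rw [Complex.normSq_eq_zero] at h0
    simp [h0]
  · have hmem : β ∈ walshSupp p m s F f := hsup
    have hw := hval β hmem
    set j₀ := fstar β with hj₀
    set P : ℤ := if p % 4 = 1 then (p : ℤ) else -p with hP
    have hsq : sqrtPStar p ^ 2 = (P : ℂ) := sqrtPStar_sq p hp2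
    have hPdvd : (p : ℤ) ∣ P := by
      rw [hP]; split <;> [exact dvd_refl _; exact dvd_neg.mpr (dvd_refl _)]
    rcases Nat.even_or_odd (m + s) with ⟨k, hk⟩ | ⟨k, hk⟩
    · -- even case, m+s = k+k, k ≥ 2
      have hk2 : 2 ≤ k := by omega
      have hpow : sqrtPStar p ^ (m + s) = ((P ^ k : ℤ) : ℂ) := by
        rw [hk, ← two_mul, pow_mul, hsq]
        push_cast; ring
      have hdvd2 : (p : ℤ) ^ 2 ∣ P ^ k :=
        dvd_trans (pow_dvd_pow _ hk2) (pow_dvd_pow_of_dvd hPdvd k)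
      obtain ⟨t, ht⟩ := hdvd2
      refine ⟨fun j => if j = j₀ then ε * (p * t) else 0, ?_, ?_⟩
      · rw [hw, hpow, ht]
        have h1 : ∀ j : ZMod p, (((if j = j₀ then ε * ((p : ℤ) * t) else 0) : ℤ) : ℂ) * eChar p j
            = (if j = j₀ then ((ε * ((p : ℤ) * t) : ℤ) : ℂ) * eChar p j else 0) := by
          intro j; split <;> simp
        have hR : ∑ j : ZMod p, (((if j = j₀ then ε * ((p : ℤ) * t) else 0) : ℤ) : ℂ) * eChar p j
            = ((ε * ((p : ℤ) * t) : ℤ) : ℂ) * eChar p j₀ := by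
          rw [Finset.sum_congr rfl fun j _ => h1 j,
            Finset.sum_ite_eq' univ j₀ (fun j => ((ε * ((p : ℤ) * t) : ℤ) : ℂ) * eChar p j)]
          simp
        rw [hR]
        push_cast
        ring
      · have hR : ∑ j : ZMod p, (if j = j₀ then ε * ((p : ℤ) * t) else 0)
            = ε * ((p : ℤ) * t) := by
          rw [Finset.sum_ite_eq' univ j₀ (fun _ => ε * ((p : ℤ) * t))]
          simp
        rw [hR]
        exact ⟨ε * t, by ring⟩
    · -- odd case, m+s = 2k+1, k ≥ 1
      have hk1 : 1 ≤ k := by omega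
      obtain ⟨σ, hσ, hgs⟩ := gauss_rep p hp2
      have hdvd1 : (p : ℤ) ∣ P ^ k := dvd_trans hPdvd (dvd_pow_self P (by omega))
      obtain ⟨t, ht⟩ := hdvd1
      have hpow : sqrtPStar p ^ (m + s) = ((P ^ k : ℤ) : ℂ) * sqrtPStar p := by
        rw [hk, pow_succ, pow_mul, hsq]
        push_cast; ring
      refine ⟨fun j => ε * t * σ * (quadraticChar (ZMod p) (j - j₀)), ?_, ?_⟩
      · have hR : ∑ j : ZMod p, ((ε * t * σ * (quadraticChar (ZMod p) (j - j₀)) : ℤ) : ℂ) * eChar p j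
            = ∑ a : ZMod p, ((ε * t * σ * (quadraticChar (ZMod p) a : ℤ) : ℤ) : ℂ) * eChar p (a + j₀) := by
          rw [← Equiv.sum_comp (Equiv.addRight j₀) (fun j => ((ε * t * σ * (quadraticChar (ZMod p) (j - j₀)) : ℤ) : ℂ) * eChar p j)]
          refine Finset.sum_congr rfl fun a _ => ?_
          simp only [Equiv.coe_addRight, add_sub_cancel_right]
        rw [hw, hpow, ht, hgs, hR]
        simp only [Finset.mul_sum, Finset.sum_mul]
        refine Finset.sum_congr rfl fun a _ => ?_
        rw [eChar_add p a j₀]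
        push_cast
        ring
      · have hz : ∑ j : ZMod p, (quadraticChar (ZMod p) (j - j₀) : ℤ) = 0 := by
          rw [← Equiv.sum_comp (Equiv.addRight j₀) _]
          simp only [Equiv.coe_addRight, add_sub_cancel_right]
          have hrc : ringChar (ZMod p) ≠ 2 := by
            rw [ZMod.ringChar_zmod_n]; exact hp2
          exact MulChar.sum_eq_zero_of_ne_one (quadraticChar_ne_one hrc)
        refine ⟨0, ?_⟩
        rw [mul_zero]
        calc ∑ j : ZMod p, ε * t * σ * (quadraticChar (ZMod p) (j - j₀) : ℤ)
            = ε * t * σ * ∑ j : ZMod p, (quadraticChar (ZMod p) (j - j₀) : ℤ) := by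
              rw [Finset.mul_sum]
          _ = 0 := by rw [hz, mul_zero]

theorem trace_rep (p m : ℕ) [Fact p.Prime] (hm : 2 ≤ m)
    (F : Type) [Field F] [Fintype F] [Algebra (ZMod p) F]
    (hcard : Fintype.card F = p ^ m) (b : F) :
    ∃ c : ZMod p → ℤ, ∑ x : F, eChar p (Algebra.trace (ZMod p) F (b * x))
      = (p : ℂ) * ∑ j : ZMod p, (c j : ℂ) * eChar p j ∧ (p : ℤ) ∣ ∑ j : ZMod p, c j := by
  by_cases h : ∀ x : F, Algebra.trace (ZMod p) F (b * x) = 0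
  · refine ⟨fun j => if j = 0 then (p : ℤ) ^ (m - 1) else 0, ?_, ?_⟩
    · have hL : ∑ x : F, eChar p (Algebra.trace (ZMod p) F (b * x)) = (p : ℂ) ^ m := by
        rw [Finset.sum_congr rfl fun x _ => by rw [h x, eChar_zero]]
        rw [Finset.sum_const, Finset.card_univ, hcard, nsmul_eq_mul]
        push_cast
        ring
      have h1 : ∀ j : ZMod p, (((if j = 0 then (p : ℤ) ^ (m - 1) else 0) : ℤ) : ℂ) * eChar p j
          = (if j = 0 then (((p : ℤ) ^ (m - 1) : ℤ) : ℂ) * eChar p j else 0) := by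
        intro j; split <;> simp
      rw [hL, Finset.sum_congr rfl fun j _ => h1 j,
        Finset.sum_ite_eq' univ (0 : ZMod p) (fun j => (((p : ℤ) ^ (m - 1) : ℤ) : ℂ) * eChar p j)]
      simp only [mem_univ, if_pos, eChar_zero, mul_one]
      push_cast
      rw [← pow_succ']
      congr 1
      omega
    · rw [Finset.sum_ite_eq' univ (0 : ZMod p) (fun _ => (p : ℤ) ^ (m - 1))]
      simp only [mem_univ, if_pos]
      exact dvd_pow_self _ (by omega)
  · push_neg at h
    obtain ⟨y, hy⟩ := h
    refine ⟨0, ?_, by simp⟩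
    have key : eChar p (Algebra.trace (ZMod p) F (b * y)) *
        (∑ x : F, eChar p (Algebra.trace (ZMod p) F (b * x)))
        = ∑ x : F, eChar p (Algebra.trace (ZMod p) F (b * x)) := by
      rw [Finset.mul_sum]
      rw [← Equiv.sum_comp (Equiv.addLeft y) (fun x => eChar p (Algebra.trace (ZMod p) F (b * x)))]
      refine Finset.sum_congr rfl fun x _ => ?_
      simp only [Equiv.coe_addLeft]
      rw [← eChar_add, ← map_add, ← mul_add]
    have hne : eChar p (Algebra.trace (ZMod p) F (b * y)) ≠ 1 := by
      intro hcon
      exact hy ((eChar_eq_one_iff p _).mp hcon)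
    have : (eChar p (Algebra.trace (ZMod p) F (b * y)) - 1) *
        (∑ x : F, eChar p (Algebra.trace (ZMod p) F (b * x))) = 0 := by
      rw [sub_mul, one_mul, key, sub_self]
    rcases mul_eq_zero.mp this with h' | h'
    · exact absurd (by linear_combination h' : eChar p (Algebra.trace (ZMod p) F (b * y)) = 1) hne
    · rw [h']; simp

theorem sq_sum_zero (p : ℕ) [Fact p.Prime] {F : Type} [Fintype F] [DecidableEq F]
    (v : F → ZMod p)
    (h : ∀ j : ZMod p, (p : ℤ) ∣ ((univ.filter (fun x => v x = j)).card : ℤ)) :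
    ∑ x : F, (v x) ^ 2 = 0 := by
  rw [← Finset.sum_fiberwise' univ v (fun j => j ^ 2)]
  refine Finset.sum_eq_zero fun j _ => ?_
  rw [Finset.sum_const, nsmul_eq_mul]
  have hj := h j
  have : (((univ.filter (fun x => v x = j)).card : ℕ) : ZMod p) = 0 := by
    rw [ZMod.natCast_eq_zero_iff]
    exact_mod_cast hj
  rw [this, zero_mul]

-- affine transform of fibers
theorem fiber_affine (p : ℕ) [Fact p.Prime] {F : Type} [Fintype F] [DecidableEq F]
    (G : F → ZMod p) (a c : ZMod p) (ha : a ≠ 0)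
    (h : ∀ j : ZMod p, (p : ℤ) ∣ ((univ.filter (fun x => G x = j)).card : ℤ)) :
    ∀ j : ZMod p, (p : ℤ) ∣ ((univ.filter (fun x => a * G x + c = j)).card : ℤ) := by
  intro j
  have : (univ.filter (fun x => a * G x + c = j)) =
      (univ.filter (fun x => G x = a⁻¹ * (j - c))) := by
    refine Finset.filter_congr fun x _ => ?_
    constructor
    · intro hx
      have h1 : a * G x = j - c := by linear_combination hx
      rw [← h1, ← mul_assoc, inv_mul_cancel₀ ha, one_mul]
    · intro hx
      rw [hx, ← mul_assoc, mul_inv_cancel₀ ha, one_mul]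
      ring
  rw [this]
  exact h _

theorem fiber_ext (p : ℕ) [Fact p.Prime] {F : Type} [Fintype F] [DecidableEq F]
    (v w : F → ZMod p) (hvw : ∀ x, v x = w x)
    (h : ∀ j : ZMod p, (p : ℤ) ∣ ((univ.filter (fun x => w x = j)).card : ℤ)) :
    ∀ j : ZMod p, (p : ℤ) ∣ ((univ.filter (fun x => v x = j)).card : ℤ) := by
  intro j
  have : (univ.filter (fun x => v x = j)) = (univ.filter (fun x => w x = j)) := by
    refine Finset.filter_congr fun x _ => by rw [hvw x]
  rw [this]
  exact h j

theorem code_sq_zero (p m s : ℕ) [Fact p.Prime] (hp2 : p ≠ 2) (hm : 2 ≤ m)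
    (hms : 3 ≤ m + s)
    (F : Type) [Field F] [Fintype F] [DecidableEq F] [Algebra (ZMod p) F]
    (hcard : Fintype.card F = p ^ m)
    (f : F → ZMod p) (ε : ℤ) (fstar : F → ZMod p)
    (hwr : IsWeaklyRegularPlateaued p m s F f ε fstar)
    (v : F → ZMod p) (hv : v ∈ codeCbar p F f) : ∑ x : F, (v x) ^ 2 = 0 := by
  obtain ⟨a, c, b, rfl⟩ := hv
  by_cases ha : a = 0
  · subst ha
    obtain ⟨cc, hcc, hccs⟩ := trace_rep p m hm F hcard b
    have hfib := fiber_dvd p m hm _ hcard cc hcc hccs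
    have hfib2 := fiber_affine p _ 1 c one_ne_zero hfib
    apply sq_sum_zero
    apply fiber_ext p _ _ (fun x => by simp) hfib2
  · -- a ≠ 0 case
    set α : F := algebraMap (ZMod p) F a with hα
    have hαne : α ≠ 0 := by
      rw [hα]
      simp only [ne_eq, _root_.map_eq_zero]
      exact ha
    set β : F := -α⁻¹ * b with hβ
    set G : F → ZMod p := fun x => f x - Algebra.trace (ZMod p) F (β * x) with hG
    have hWG : ∑ x : F, eChar p (G x) = walsh p F f β := rfl
    obtain ⟨cc, hcc, hccs⟩ := walsh_rep p m s hp2 hms F f ε fstar hwr β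
    have hfib := fiber_dvd p m hm G hcard cc (by rw [hWG]; exact hcc) hccs
    have hfib2 := fiber_affine p G a c ha hfib
    apply sq_sum_zero
    refine fiber_ext p _ _ (fun x => ?_) hfib2
    -- a * f x + Tr(b x) + c = a * G x + c
    have htr : a * Algebra.trace (ZMod p) F (β * x) = - Algebra.trace (ZMod p) F (b * x) := by
      have h1 : a • (β * x) = - (b * x) := by
        rw [← smul_mul_assoc, Algebra.smul_def, ← hα, hβ]
        field_simp
      calc a * Algebra.trace (ZMod p) F (β * x)
          = Algebra.trace (ZMod p) F (a • (β * x)) := by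
            rw [map_smul]; simp [smul_eq_mul]
        _ = - Algebra.trace (ZMod p) F (b * x) := by rw [h1, map_neg]
    show a * f x + Algebra.trace (ZMod p) F (b * x) + c
      = a * (f x - Algebra.trace (ZMod p) F (β * x)) + c
    rw [mul_sub, htr]
    ring

theorem statement4 (p m s : ℕ) [Fact p.Prime] (hp2 : p ≠ 2) (hm : 2 ≤ m) (hs : s ≤ m)
    (hms : 3 ≤ m + s)
    (F : Type) [Field F] [Fintype F] [Algebra (ZMod p) F]
    (hcard : Fintype.card F = p ^ m)
    (f : F → ZMod p) (hf0 : f 0 = 0) (ε : ℤ) (fstar : F → ZMod p)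
    (hwr : IsWeaklyRegularPlateaued p m s F f ε fstar) :
    codeCbar p F f ⊆ (dualCode (codeCbar p F f) : Set (F → ZMod p)) := by
  classical
  intro u hu
  have hQ : ∀ w ∈ codeCbar p F f, ∑ x : F, (w x) ^ 2 = 0 := fun w hw =>
    code_sq_zero p m s hp2 hm hms F hcard f ε fstar hwr w hw
  show u ∈ dualCode (codeCbar p F f)
  have hmem : ∀ v ∈ codeCbar p F f, ∑ i, u i * v i = 0 := by
    intro v hv
    -- closure under addition
    obtain ⟨a1, c1, b1, hu1⟩ := id hu
    obtain ⟨a2, c2, b2, hv2⟩ := id hv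
    have hsumcode : (fun x => u x + v x) ∈ codeCbar p F f := by
      refine ⟨a1 + a2, c1 + c2, b1 + b2, ?_⟩
      funext x
      rw [hu1, hv2]
      simp only [map_add, add_mul]
      ring
    have e1 := hQ _ hsumcode
    have e2 := hQ u hu
    have e3 := hQ v hv
    have hpoly : ∑ x : F, (u x + v x) ^ 2
        = (∑ x : F, (u x) ^ 2) + (∑ x : F, (v x) ^ 2) + 2 * ∑ x : F, u x * v x := by
      rw [Finset.mul_sum, ← Finset.sum_add_distrib, ← Finset.sum_add_distrib]
      refine Finset.sum_congr rfl fun x _ => by ring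
    rw [e1, e2, e3] at hpoly
    have h2 : (2 : ZMod p) * ∑ x : F, u x * v x = 0 := by linear_combination -hpoly
    have h2ne : (2 : ZMod p) ≠ 0 := by
      intro hcon
      have : (p : ℕ) ∣ 2 := by
        have := (ZMod.natCast_eq_zero_iff 2 p).mp (by exact_mod_cast hcon)
        exact this
      have hple := Nat.le_of_dvd (by norm_num) this
      have h2le := (Fact.out : p.Prime).two_le
      exact hp2 (by omega)
    exact (mul_eq_zero.mp h2).resolve_left h2ne
  exact hmem
end

section
/- Let p be an odd prime, m a positive integer, and let s be an integer with 0 ≤ s ≤ m such that m+s is odd and m+s ≥ 3. Let f : F_q → F_p be a weakly regular s-plateaued function with f(0) = 0, which is balanced (W_f(0) = 0). Then the extended code C̄_f' has length p^m + m + 2, dimension m + 2, and minimum distance at least p^m − p^{m−1} − p^{(m+s−1)/2} + 2. -/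
open Finset

open Finset Polynomial

lemma st9_twist (p : ℕ) [Fact p.Prime] {ζ : ℂ} (hζ : IsPrimitiveRoot ζ p)
    (d : ZMod p → ℚ) (h : ∑ j : ZMod p, (d j : ℂ) * ζ ^ (j.val) = 0)
    (u : ZMod p) (hu : u ≠ 0) :
    ∑ j : ZMod p, (d j : ℂ) * ζ ^ ((u * j).val) = 0 := by
  have hp : p.Prime := Fact.out
  have hp0 : 0 < p := hp.pos
  have hζp : ζ ^ p = 1 := hζ.pow_eq_one
  set D : ℚ[X] := ∑ j : ZMod p, Polynomial.C (d j) * Polynomial.X ^ (j.val) with hD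
  have hev : ∀ z : ℂ, (Polynomial.aeval z) D = ∑ j : ZMod p, (d j : ℂ) * z ^ (j.val) := by
    intro z
    simp [hD, map_sum]
  have hroot : (Polynomial.aeval ζ) D = 0 := by rw [hev]; exact h
  have hdvd : minpoly ℚ ζ ∣ D := minpoly.dvd ℚ ζ hroot
  have huval : u.val ≠ 0 := fun h0 => hu (by rwa [← ZMod.val_eq_zero])
  have hvlt : u.val < p := ZMod.val_lt u
  have hcop : Nat.Coprime u.val p :=
    Nat.Coprime.symm ((Nat.Prime.coprime_iff_not_dvd hp).mpr
      (Nat.not_dvd_of_pos_of_lt (Nat.pos_of_ne_zero huval) hvlt))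
  have hprim2 : IsPrimitiveRoot (ζ ^ u.val) p := hζ.pow_of_coprime u.val hcop
  have hmp : minpoly ℚ ζ = minpoly ℚ (ζ ^ u.val) := by
    rw [← Polynomial.cyclotomic_eq_minpoly_rat hζ hp0,
      ← Polynomial.cyclotomic_eq_minpoly_rat hprim2 hp0]
  have hroot2 : (Polynomial.aeval (ζ ^ u.val)) D = 0 := by
    obtain ⟨q, hq⟩ := hdvd
    rw [hq, map_mul, hmp, minpoly.aeval, zero_mul]
  rw [hev] at hroot2
  rw [← hroot2]
  refine Finset.sum_congr rfl fun j _ => ?_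
  rw [ZMod.val_mul, ← pow_eq_pow_mod _ hζp, ← pow_mul]

lemma st9_count_bound (p m s : ℕ) [Fact p.Prime] (hp2 : p ≠ 2) (hm : 1 ≤ m)
    (hpar : Odd (m + s))
    (F : Type) [Field F] [Fintype F] [Algebra (ZMod p) F]
    (hcard : Fintype.card F = p ^ m)
    (f : F → ZMod p) (ε : ℤ) (fstar : F → ZMod p)
    (hwr : IsWeaklyRegularPlateaued p m s F f ε fstar)
    (hbal : walsh p F f 0 = 0)
    (a c : ZMod p) (ha : a ≠ 0) (b : F) :
    (univ.filter (fun x : F =>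
        a * f x + Algebra.trace (ZMod p) F (b * x) + a + c = 0)).card * p
      ≤ p ^ m + p ^ ((m + s - 1) / 2 + 1) ∧
    (b = 0 →
      (univ.filter (fun x : F =>
          a * f x + Algebra.trace (ZMod p) F (b * x) + a + c = 0)).card * p = p ^ m) := by
  classical
  have hp : p.Prime := Fact.out
  have hp0 : p ≠ 0 := hp.ne_zero
  haveI : NeZero p := ⟨hp0⟩
  have hp1 : 1 < p := hp.one_lt
  have hpodd : p % 2 = 1 := Nat.odd_iff.mp (hp.odd_of_ne_two hp2)
  set k := (m + s - 1) / 2 with hkdef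
  have hk : m + s = 2 * k + 1 := by
    obtain ⟨k', hk'⟩ := hpar; omega
  -- root of unity and characters
  set ζ : ℂ := zetaP p with hζdef
  have hζ : IsPrimitiveRoot ζ p := Complex.isPrimitiveRoot_exp p hp0
  have hζp : ζ ^ p = 1 := hζ.pow_eq_one
  set ψ : AddChar (ZMod p) ℂ := AddChar.zmodChar p hζp with hψdef
  have hψa : ∀ j : ZMod p, ψ j = ζ ^ j.val := fun j => AddChar.zmodChar_apply hζp j
  have hψe : ∀ j : ZMod p, eChar p j = ψ j := fun j => (hψa j).symm
  have hψprim : ψ.IsPrimitive := AddChar.zmodChar_primitive_of_primitive_root p hζ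
  set χ : MulChar (ZMod p) ℂ := (quadraticChar (ZMod p)).ringHomComp (Int.castRingHom ℂ)
    with hχdef
  have hringchar : ringChar (ZMod p) ≠ 2 := by rw [ZMod.ringChar_zmod_n]; exact hp2
  have hχ1 : χ ≠ 1 :=
    (MulChar.ringHomComp_ne_one_iff (by exact_mod_cast Int.cast_injective)).mpr
      (quadraticChar_ne_one hringchar)
  have hχval : ∀ t : ZMod p, χ t = ((quadraticChar (ZMod p) t : ℤ) : ℂ) := fun t => rfl
  have hχq : χ.IsQuadratic := (quadraticChar_isQuadratic (ZMod p)).comp _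
  set g : ℂ := gaussSum χ ψ with hgdef
  have hg2 : g ^ 2 = χ (-1) * p := by
    have := gaussSum_sq hχ1 hχq hψprim
    rwa [ZMod.card] at this
  have hp4 : p % 4 = 1 ∨ p % 4 = 3 := by omega
  have hqm1 : quadraticChar (ZMod p) (-1) = (if p % 4 = 1 then 1 else -1) := by
    rw [quadraticChar_neg_one hringchar, ZMod.card, ZMod.χ₄_nat_eq_if_mod_four]
    simp [hpodd]
  set pstar : ℂ := χ (-1) * p with hpstardef
  have hpC : (p : ℂ) ≠ 0 := Nat.cast_ne_zero.mpr hp0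
  have hsqrt2 : sqrtPStar p ^ 2 = pstar := by
    rw [sqrtPStar, hpstardef, hχval, hqm1]
    rcases hp4 with h4 | h4
    · rw [if_pos h4, if_pos h4]
      push_cast
      rw [← Complex.ofReal_pow, Real.sq_sqrt (by positivity)]
      simp
    · have h4' : ¬ (p % 4 = 1) := by omega
      rw [if_neg h4', if_neg h4']
      rw [mul_pow, Complex.I_sq]
      push_cast
      rw [← Complex.ofReal_pow, Real.sq_sqrt (by positivity)]
      simp
  have hpstar_ne : pstar ≠ 0 := by
    rw [hpstardef, hχval, hqm1]
    rcases hp4 with h4 | h4 <;> simp [h4, hpC]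
  have hpg : pstar = g ^ 2 := hg2.symm
  have hg0 : g ≠ 0 := by
    intro h0
    apply hpstar_ne
    rw [hpg, h0]; ring
  set δ : ℂ := sqrtPStar p / g with hδdef
  have hδg : sqrtPStar p = δ * g := by rw [hδdef]; field_simp
  have hδ2 : δ ^ 2 = 1 := by
    rw [hδdef, div_pow, hsqrt2, hpg]
    exact div_self (pow_ne_zero 2 hg0)
  obtain ⟨eδ, heδC, heδ1⟩ : ∃ eδ : ℤ, (eδ : ℂ) = δ ∧ (eδ = 1 ∨ eδ = -1) := by
    have hfac : (δ - 1) * (δ + 1) = 0 := by linear_combination hδ2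
    rcases mul_eq_zero.mp hfac with h0 | h0
    · exact ⟨1, by rw [sub_eq_zero] at h0; simp [← h0], Or.inl rfl⟩
    · refine ⟨-1, ?_, Or.inr rfl⟩
      rw [add_eq_zero_iff_eq_neg] at h0
      simp [h0]
  -- basic character sums
  have hL1 : ∀ t : ZMod p, ∑ y : ZMod p, ψ (y * t) = if t = 0 then (p : ℂ) else 0 := by
    intro t
    by_cases ht : t = 0
    · rw [if_pos ht]
      simp only [ht, mul_zero, AddChar.map_zero_eq_one]
      rw [Finset.sum_const, Finset.card_univ, ZMod.card, nsmul_eq_mul, mul_one]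
    · rw [if_neg ht]
      rw [Finset.sum_congr rfl (fun y _ => by
        rw [show y * t = t * y from mul_comm y t, ← AddChar.mulShift_apply])]
      exact AddChar.sum_eq_zero_of_ne_one (hψprim ht)
  have hgauss : ∀ t : ZMod p, ∑ y : ZMod p, χ y * ψ (y * t) = χ t * g := by
    intro t
    by_cases ht : t = 0
    · subst ht
      simp only [mul_zero, AddChar.map_zero_eq_one, mul_one, MulChar.map_zero, zero_mul]
      exact MulChar.sum_eq_zero_of_ne_one hχ1
    · have hunit := gaussSum_mulShift χ ψ (Units.mk0 t ht)
      have hexp : gaussSum χ (AddChar.mulShift ψ ((Units.mk0 t ht : (ZMod p)ˣ) : ZMod p))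
          = ∑ y : ZMod p, χ y * ψ (y * t) := by
        rw [gaussSum]
        refine Finset.sum_congr rfl fun y _ => ?_
        rw [AddChar.mulShift_apply]
        norm_num [mul_comm]
      rw [hexp] at hunit
      simp only [Units.val_mk0] at hunit
      have hsq : χ t * χ t = 1 := by
        rw [hχval]
        rw [show ((quadraticChar (ZMod p) t : ℤ) : ℂ) * ((quadraticChar (ZMod p) t : ℤ) : ℂ)
          = (((quadraticChar (ZMod p) t ^ 2 : ℤ)) : ℂ) by push_cast; ring]
        rw [quadraticChar_sq_one ht]
        simp
      calc ∑ y : ZMod p, χ y * ψ (y * t)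
          = (χ t * χ t) * ∑ y : ZMod p, χ y * ψ (y * t) := by rw [hsq, one_mul]
        _ = χ t * (χ t * ∑ y : ZMod p, χ y * ψ (y * t)) := by ring
        _ = χ t * g := by rw [hunit]
  -- fiberwise decomposition
  have hfsum : ∀ (T : F → ZMod p) (w : ZMod p → ℂ), ∑ x : F, w (T x)
      = ∑ j : ZMod p, ((univ.filter (fun x => T x = j)).card : ℂ) * w j := by
    intro T w
    rw [← Finset.sum_fiberwise' univ T w]
    refine Finset.sum_congr rfl fun j _ => ?_
    rw [Finset.sum_const, nsmul_eq_mul]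
  -- KEY conjugation lemma
  have hkey : ∀ (u : ZMod p), u ≠ 0 → ∀ β : F,
      ∑ x : F, ψ (u * (f x - Algebra.trace (ZMod p) F (β * x)))
        = if Complex.normSq (walsh p F f β) = (p : ℝ) ^ (m + s)
          then (ε : ℂ) * pstar ^ k * χ u * sqrtPStar p * ψ (u * fstar β) else 0 := by
    intro u hu β
    set T : F → ZMod p := fun x => f x - Algebra.trace (ZMod p) F (β * x) with hTdef
    set NN : ZMod p → ℕ := fun j => (univ.filter (fun x => T x = j)).card with hNNdef
    have hwalshT : walsh p F f β = ∑ j : ZMod p, (NN j : ℂ) * ψ j := by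
      rw [walsh, Finset.sum_congr rfl (fun x _ => hψe _), hfsum T ψ]
    have hLHS : ∑ x : F, ψ (u * T x) = ∑ j : ZMod p, (NN j : ℂ) * ψ (u * j) :=
      hfsum T (fun j => ψ (u * j))
    by_cases hβS : Complex.normSq (walsh p F f β) = (p : ℝ) ^ (m + s)
    · rw [if_pos hβS]
      have hwβ := hwr.2.2.2 β hβS
      set q1 : ℤ := quadraticChar (ZMod p) (-1) with hq1def
      set B : ℤ := ε * eδ * (q1 * p) ^ k with hBdef
      have hpstarZ : pstar = ((q1 * p : ℤ) : ℂ) := by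
        rw [hpstardef, hχval, hq1def]; push_cast; ring
      have hBC : (B : ℂ) = (ε : ℂ) * δ * pstar ^ k := by
        have : (B : ℂ) = (ε : ℂ) * (eδ : ℂ) * (((q1 * p : ℤ) : ℂ)) ^ k := by
          rw [hBdef]; push_cast; ring
        rw [this, heδC, ← hpstarZ]
      have hrhs : walsh p F f β = ∑ j : ZMod p, ((B : ℂ) * χ (j - fstar β)) * ψ j := by
        rw [hwβ, hψe]
        have hpow : sqrtPStar p ^ (m + s) = pstar ^ k * (δ * g) := by
          rw [hk, pow_succ, pow_mul, hsqrt2, hδg]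
        rw [hpow]
        have hstep : ∀ y : ZMod p, (B : ℂ) * χ y * ψ (y + fstar β)
            = (fun j => ((B : ℂ) * χ (j - fstar β)) * ψ j) (y + fstar β) := by
          intro y; simp
        rw [← Fintype.sum_equiv (Equiv.addRight (fstar β))
          (fun y => (B : ℂ) * χ y * ψ (y + fstar β))
          (fun j => ((B : ℂ) * χ (j - fstar β)) * ψ j) hstep]
        rw [Finset.sum_congr rfl (fun y _ => by
          rw [AddChar.map_add_eq_mul] :
            ∀ y ∈ univ, (B : ℂ) * χ y * ψ (y + fstar β) = (B : ℂ) * χ y * (ψ y * ψ (fstar β)))]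
        rw [show ∑ y : ZMod p, (B : ℂ) * χ y * (ψ y * ψ (fstar β))
            = (B : ℂ) * (∑ y : ZMod p, χ y * ψ y) * ψ (fstar β) by
          rw [Finset.mul_sum, Finset.sum_mul]; exact Finset.sum_congr rfl fun y _ => by ring]
        rw [show (∑ y : ZMod p, χ y * ψ y) = g from rfl, hBC]
        ring
      set d : ZMod p → ℚ := fun j =>
        (NN j : ℚ) - (B : ℚ) * (quadraticChar (ZMod p) (j - fstar β) : ℚ) with hddef
      have hterm : ∀ (w j : ZMod p), (d j : ℂ) * ζ ^ (w.val)
          = (NN j : ℂ) * ψ w - ((B : ℂ) * χ (j - fstar β)) * ψ w := by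
        intro w j
        rw [hψa, hχval, hddef]
        push_cast
        ring
      have hd0 : ∑ j : ZMod p, (d j : ℂ) * ζ ^ (j.val) = 0 := by
        rw [Finset.sum_congr rfl (fun j _ => hterm j j), Finset.sum_sub_distrib,
          ← hwalshT, ← hrhs, sub_self]
      have htw := st9_twist p hζ d hd0 u hu
      rw [Finset.sum_congr rfl (fun j _ => hterm (u * j) j),
        Finset.sum_sub_distrib, sub_eq_zero] at htw
      rw [hLHS, htw]
      -- now compute RHS sum
      have hstep2 : ∀ y : ZMod p, (B : ℂ) * χ y * ψ (u * (y + fstar β))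
          = (fun j => ((B : ℂ) * χ (j - fstar β)) * ψ (u * j)) (y + fstar β) := by
        intro y; simp
      rw [← Fintype.sum_equiv (Equiv.addRight (fstar β))
        (fun y => (B : ℂ) * χ y * ψ (u * (y + fstar β)))
        (fun j => ((B : ℂ) * χ (j - fstar β)) * ψ (u * j)) hstep2]
      have hsplitψ : ∀ y : ZMod p, ψ (u * (y + fstar β)) = ψ (y * u) * ψ (u * fstar β) := by
        intro y
        rw [← AddChar.map_add_eq_mul]
        congr 1
        ring
      rw [Finset.sum_congr rfl (fun y _ => by rw [hsplitψ y] :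
        ∀ y ∈ univ, (B : ℂ) * χ y * ψ (u * (y + fstar β))
          = (B : ℂ) * χ y * (ψ (y * u) * ψ (u * fstar β)))]
      rw [show ∑ y : ZMod p, (B : ℂ) * χ y * (ψ (y * u) * ψ (u * fstar β))
          = (B : ℂ) * (∑ y : ZMod p, χ y * ψ (y * u)) * ψ (u * fstar β) by
        rw [Finset.mul_sum, Finset.sum_mul]; exact Finset.sum_congr rfl fun y _ => by ring]
      rw [hgauss u, hBC, hδg]
      ring
    · rw [if_neg hβS]
      have hw0 : walsh p F f β = 0 := by
        rcases hwr.1 β with h0 | h1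
        · exact Complex.normSq_eq_zero.mp h0
        · exact absurd h1 hβS
      set d : ZMod p → ℚ := fun j => (NN j : ℚ) with hddef
      have hd0 : ∑ j : ZMod p, (d j : ℂ) * ζ ^ (j.val) = 0 := by
        rw [Finset.sum_congr rfl (fun j _ => by rw [hddef, ← hψa j]; push_cast; ring :
          ∀ j ∈ univ, (d j : ℂ) * ζ ^ (j.val) = (NN j : ℂ) * ψ j)]
        rw [← hwalshT, hw0]
      have htw := st9_twist p hζ d hd0 u hu
      rw [hLHS]
      rw [← htw]
      refine Finset.sum_congr rfl fun j _ => ?_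
      rw [hddef, hψa]
      push_cast
      ring
  -- main counting
  have hpstarZ : pstar = (((quadraticChar (ZMod p) (-1)) * p : ℤ) : ℂ) := by
    rw [hpstardef, hχval]; push_cast; ring
  set A : F := algebraMap (ZMod p) F a with hAdef
  have hA0 : A ≠ 0 := by
    intro h0
    exact ha ((algebraMap (ZMod p) F).injective (h0.trans (map_zero _).symm))
  set β0 : F := -(A⁻¹ * b) with hβ0def
  have hTrmul : ∀ (y : ZMod p) (w : F), y * (Algebra.trace (ZMod p) F) w
      = (Algebra.trace (ZMod p) F) (algebraMap (ZMod p) F y * w) := by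
    intro y w; rw [← Algebra.smul_def, map_smul, smul_eq_mul]
  have hsplit : ∀ (y : ZMod p) (x : F),
      y * (a * f x + (Algebra.trace (ZMod p) F) (b * x) + a + c)
      = (y * a) * (f x - (Algebra.trace (ZMod p) F) (β0 * x)) + y * (a + c) := by
    intro y x
    have h1 : (y * a) * (Algebra.trace (ZMod p) F) (β0 * x)
        = -(y * (Algebra.trace (ZMod p) F) (b * x)) := by
      rw [hTrmul, hTrmul, ← map_neg]
      congr 1
      rw [hβ0def, map_mul, ← hAdef]
      field_simp
    linear_combination h1
  set Z : ℕ := (univ.filter (fun x : F =>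
      a * f x + (Algebra.trace (ZMod p) F) (b * x) + a + c = 0)).card with hZdef
  have hZC : (Z : ℂ) * p = ∑ y : ZMod p, ∑ x : F,
      ψ (y * (a * f x + (Algebra.trace (ZMod p) F) (b * x) + a + c)) := by
    calc (Z : ℂ) * p
        = ∑ x : F, (if a * f x + (Algebra.trace (ZMod p) F) (b * x) + a + c = 0
            then (p : ℂ) else 0) := by
          rw [Finset.sum_ite, Finset.sum_const, Finset.sum_const_zero, add_zero,
            nsmul_eq_mul, hZdef]
      _ = ∑ x : F, ∑ y : ZMod p, ψ (y * (a * f x + (Algebra.trace (ZMod p) F) (b * x) + a + c)) := by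
          refine Finset.sum_congr rfl fun x _ => ?_
          rw [hL1]
      _ = _ := Finset.sum_comm
  have hy0term : ∑ x : F,
      ψ ((0 : ZMod p) * (a * f x + (Algebra.trace (ZMod p) F) (b * x) + a + c)) = (p : ℂ) ^ m := by
    simp only [zero_mul, AddChar.map_zero_eq_one]
    rw [Finset.sum_const, Finset.card_univ, hcard, nsmul_eq_mul, mul_one]
    push_cast
    ring
  have hyterm : ∀ y : ZMod p, y ≠ 0 →
      ∑ x : F, ψ (y * (a * f x + (Algebra.trace (ZMod p) F) (b * x) + a + c))
      = ψ (y * (a + c)) *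
        (if Complex.normSq (walsh p F f β0) = (p : ℝ) ^ (m + s)
          then (ε : ℂ) * pstar ^ k * χ (y * a) * sqrtPStar p * ψ ((y * a) * fstar β0) else 0) := by
    intro y hy
    rw [Finset.sum_congr rfl (fun x _ => by rw [hsplit y x, AddChar.map_add_eq_mul] :
      ∀ x ∈ univ, ψ (y * (a * f x + (Algebra.trace (ZMod p) F) (b * x) + a + c))
        = ψ ((y * a) * (f x - (Algebra.trace (ZMod p) F) (β0 * x))) * ψ (y * (a + c)))]
    rw [← Finset.sum_mul, hkey (y * a) (mul_ne_zero hy ha) β0, mul_comm]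
  by_cases hS : Complex.normSq (walsh p F f β0) = (p : ℝ) ^ (m + s)
  · -- support case
    set t : ZMod p := a + c + a * fstar β0 with htdef
    have hterm2 : ∀ y ∈ univ.erase (0 : ZMod p),
        ∑ x : F, ψ (y * (a * f x + (Algebra.trace (ZMod p) F) (b * x) + a + c))
        = ((ε : ℂ) * pstar ^ k * sqrtPStar p * χ a) * (χ y * ψ (y * t)) := by
      intro y hy
      rw [hyterm y (Finset.mem_erase.mp hy).1, if_pos hS, map_mul χ y a]
      have hψmul : ψ (y * (a + c)) * ψ ((y * a) * fstar β0) = ψ (y * t) := by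
        rw [← AddChar.map_add_eq_mul]
        congr 1
        rw [htdef]; ring
      calc ψ (y * (a + c)) * ((ε : ℂ) * pstar ^ k * (χ y * χ a) * sqrtPStar p
            * ψ ((y * a) * fstar β0))
          = ((ε : ℂ) * pstar ^ k * sqrtPStar p * χ a) * χ y *
              (ψ (y * (a + c)) * ψ ((y * a) * fstar β0)) := by ring
        _ = _ := by rw [hψmul]; ring
    have hsum2 : ∑ y ∈ univ.erase (0 : ZMod p), (χ y * ψ (y * t)) = χ t * g := by
      have h2 := Finset.sum_erase_add univ (fun y => χ y * ψ (y * t)) (mem_univ (0 : ZMod p))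
      rw [hgauss t] at h2
      have h0 : χ (0 : ZMod p) * ψ ((0 : ZMod p) * t) = 0 := by
        rw [MulChar.map_zero, zero_mul]
      rw [h0, add_zero] at h2
      exact h2
    have hZCval : (Z : ℂ) * p
        = (p : ℂ) ^ m + ((ε : ℂ) * pstar ^ k * sqrtPStar p * χ a) * (χ t * g) := by
      rw [hZC, ← Finset.sum_erase_add univ _ (mem_univ (0 : ZMod p)), hy0term,
        Finset.sum_congr rfl hterm2, ← Finset.mul_sum, hsum2]
      ring
    set Q : ℤ := ε * eδ * (quadraticChar (ZMod p) a) * (quadraticChar (ZMod p) t)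
      * ((quadraticChar (ZMod p) (-1)) * p) ^ (k + 1) with hQdef
    have hQC : ((ε : ℂ) * pstar ^ k * sqrtPStar p * χ a) * (χ t * g) = (Q : ℂ) := by
      have hgg : g * g = pstar := by rw [hpg]; ring
      have h1 : ((ε : ℂ) * pstar ^ k * (δ * g) * χ a) * (χ t * g)
          = (ε : ℂ) * δ * χ a * χ t * pstar ^ (k + 1) := by
        rw [pow_succ, ← hgg]; ring
      rw [hδg, h1]
      have h2 : (Q : ℂ) = (ε : ℂ) * (eδ : ℂ) * χ a * χ t
          * (((quadraticChar (ZMod p) (-1)) * p : ℤ) : ℂ) ^ (k + 1) := by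
        rw [hQdef, hχval, hχval]; push_cast; ring
      rw [h2, heδC, ← hpstarZ]
    have hZint : (Z : ℤ) * p = p ^ m + Q := by
      have hC : (((Z : ℤ) * p : ℤ) : ℂ) = (((p : ℤ) ^ m + Q : ℤ) : ℂ) := by
        push_cast
        rw [hZCval, hQC]
      exact_mod_cast hC
    have hQle : Q ≤ (p : ℤ) ^ (k + 1) := by
      refine le_trans (le_abs_self Q) ?_
      have hqa : |quadraticChar (ZMod p) a| ≤ 1 := by
        rcases (quadraticChar_isQuadratic (ZMod p)) a with h | h | h <;> rw [h] <;> simp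
      have hqt : |quadraticChar (ZMod p) t| ≤ 1 := by
        rcases (quadraticChar_isQuadratic (ZMod p)) t with h | h | h <;> rw [h] <;> simp
      have hε : |ε| ≤ 1 := by rcases hwr.2.1 with h | h <;> rw [h] <;> simp
      have heabs : |eδ| ≤ 1 := by rcases heδ1 with h | h <;> rw [h] <;> simp
      have hq1 : |quadraticChar (ZMod p) (-1) * (p : ℤ)| ≤ (p : ℤ) := by
        rw [hqm1]
        split_ifs <;> simp [abs_mul]
      calc |Q| = |ε| * |eδ| * |quadraticChar (ZMod p) a| * |quadraticChar (ZMod p) t|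
          * |quadraticChar (ZMod p) (-1) * (p : ℤ)| ^ (k + 1) := by
            rw [hQdef, abs_mul, abs_mul, abs_mul, abs_mul, abs_pow]
        _ ≤ 1 * 1 * 1 * 1 * (p : ℤ) ^ (k + 1) := by gcongr <;> positivity
        _ = (p : ℤ) ^ (k + 1) := by ring
    constructor
    · have hle : (Z : ℤ) * p ≤ (p : ℤ) ^ m + (p : ℤ) ^ (k + 1) := by
        rw [hZint]
        have : ((p : ℤ) ^ m : ℤ) = (p : ℤ) ^ m := rfl
        linarith
      exact_mod_cast hle
    · intro hb0
      exfalso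
      have hβ00 : β0 = 0 := by rw [hβ0def, hb0, mul_zero, neg_zero]
      rw [hβ00, hbal, Complex.normSq_zero] at hS
      have hpos : (0 : ℝ) < (p : ℝ) ^ (m + s) := by positivity
      linarith [hS]
  · -- non-support case
    have hall : ∀ y ∈ univ.erase (0 : ZMod p),
        ∑ x : F, ψ (y * (a * f x + (Algebra.trace (ZMod p) F) (b * x) + a + c)) = 0 := by
      intro y hy
      rw [hyterm y (Finset.mem_erase.mp hy).1, if_neg hS, mul_zero]
    have hZCval : (Z : ℂ) * p = (p : ℂ) ^ m := by
      rw [hZC, ← Finset.sum_erase_add univ _ (mem_univ (0 : ZMod p)), hy0term,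
        Finset.sum_eq_zero hall, zero_add]
    have hZnat : Z * p = p ^ m := by exact_mod_cast hZCval
    exact ⟨by rw [hZnat]; exact Nat.le_add_right _ _, fun _ => hZnat⟩

lemma st9_indep (p m : ℕ) [Fact p.Prime] (F : Type) [Field F] [Fintype F] [Algebra (ZMod p) F]
    (hcard : Fintype.card F = p ^ m)
    (α : F) (hα : ∀ x : F, x ≠ 0 → ∃ k : ℕ, x = α ^ k) :
    LinearIndependent (ZMod p) (fun i : Fin m => α ^ (i : ℕ)) := by
  have hfr : Module.finrank (ZMod p) F = m := by
    have h := Module.card_eq_pow_finrank (K := ZMod p) (V := F)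
    rw [ZMod.card, hcard] at h
    exact (Nat.pow_right_injective (Fact.out (p := p.Prime)).two_le h.symm)
  have hint : IsIntegral (ZMod p) α := Algebra.IsIntegral.isIntegral α
  have hadj : Algebra.adjoin (ZMod p) {α} = ⊤ := by
    rw [eq_top_iff]
    rintro x -
    by_cases hx : x = 0
    · subst hx; exact zero_mem _
    · obtain ⟨k, rfl⟩ := hα x hx
      exact pow_mem (Algebra.subset_adjoin (Set.mem_singleton α)) k
  let pb : PowerBasis (ZMod p) F := (Algebra.adjoin.powerBasis hint).map
    ((Subalgebra.equivOfEq _ _ hadj).trans Subalgebra.topEquiv)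
  have hgen : pb.gen = α := by
    simp [pb, PowerBasis.map_gen, Algebra.adjoin.powerBasis_gen]
  have hdim : pb.dim = m := by rw [← PowerBasis.finrank pb]; exact hfr
  have hli := pb.basis.linearIndependent
  rw [pb.coe_basis, hgen] at hli
  have := hli.comp (finCongr hdim.symm) (finCongr hdim.symm).injective
  convert this using 1
  funext i
  simp
  rfl

lemma st9_wt_sumElim {n₁ n₂ : Type} [Fintype n₁] [Fintype n₂] {K : Type} [Zero K]
    [DecidableEq K] (u : n₁ → K) (w : n₂ → K) :
    wtH (Sum.elim u w) = wtH u + wtH w := by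
  unfold wtH
  rw [Finset.card_filter, Finset.card_filter, Finset.card_filter, Fintype.sum_sum_type]
  rfl

lemma st9_count_lin (p m : ℕ) [Fact p.Prime] (F : Type) [Field F] [Fintype F]
    [Algebra (ZMod p) F] (hcard : Fintype.card F = p ^ m) (b : F) (hb : b ≠ 0) (c : ZMod p) :
    (univ.filter (fun x : F => Algebra.trace (ZMod p) F (b * x) + c = 0)).card * p = p ^ m := by
  set T : F → ZMod p := fun x => Algebra.trace (ZMod p) F (b * x) with hT
  obtain ⟨z, hz⟩ := Algebra.trace_surjective (ZMod p) F 1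
  set x0 : F := b⁻¹ * z with hx0
  have hTx0 : T x0 = 1 := by
    rw [hT]; simp only [hx0]
    rw [show b * (b⁻¹ * z) = z by field_simp, hz]
  have hTadd : ∀ (x : F) (u : ZMod p), T (x + u • x0) = T x + u := by
    intro x u
    simp only [hT, mul_add, map_add]
    congr 1
    rw [show b * u • x0 = u • (b * x0) from mul_smul_comm u b x0, map_smul,
      show b * x0 = z by rw [hx0]; field_simp, hz, smul_eq_mul, mul_one]
  have hfib : ∀ j j' : ZMod p, (univ.filter (fun x => T x = j)).card
      = (univ.filter (fun x => T x = j')).card := by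
    intro j j'
    apply Finset.card_bij' (fun x _ => x + (j' - j) • x0) (fun x _ => x + (j - j') • x0)
    · intro x hx
      simp only [mem_filter, mem_univ, true_and] at hx ⊢
      rw [hTadd, hx]; ring
    · intro x hx
      simp only [mem_filter, mem_univ, true_and] at hx ⊢
      rw [hTadd, hx]; ring
    · intro x _; rw [add_assoc, ← add_smul]; simp
    · intro x _; rw [add_assoc, ← add_smul]; simp
  have htot := Finset.card_eq_sum_card_fiberwise (f := T) (s := univ) (t := univ)
    (fun x _ => mem_univ _)
  rw [Finset.sum_congr rfl (fun j _ => hfib j (-c)), Finset.sum_const, Finset.card_univ,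
    Finset.card_univ, ZMod.card, hcard, smul_eq_mul] at htot
  have hfc : (univ.filter (fun x : F => T x + c = 0)) = (univ.filter (fun x => T x = -c)) := by
    apply Finset.filter_congr; intro x _
    constructor
    · intro h; linear_combination h
    · intro h; linear_combination h
  show (univ.filter (fun x : F => T x + c = 0)).card * p = p ^ m
  rw [hfc, mul_comm, ← htot]

theorem statement9 (p m s : ℕ) [Fact p.Prime] (hp2 : p ≠ 2) (hm : 1 ≤ m) (hs : s ≤ m)
    (hpar : Odd (m + s)) (hms : 3 ≤ m + s)
    (F : Type) [Field F] [Fintype F] [Algebra (ZMod p) F]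
    (hcard : Fintype.card F = p ^ m)
    (α : F) (hα : ∀ x : F, x ≠ 0 → ∃ k : ℕ, x = α ^ k)
    (f : F → ZMod p) (hf0 : f 0 = 0) (ε : ℤ) (fstar : F → ZMod p)
    (hwr : IsWeaklyRegularPlateaued p m s F f ε fstar)
    (hbal : walsh p F f 0 = 0) :
    Fintype.card (Fin (m + 2) ⊕ F) = p ^ m + m + 2 ∧
    Set.ncard (extCode p m F f α) = p ^ (m + 2) ∧
    (∀ v ∈ extCode p m F f α, v ≠ 0 →
      p ^ m - p ^ (m - 1) - p ^ ((m + s - 1) / 2) + 2 ≤ wtH v) := by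
  classical
  have hp : p.Prime := Fact.out
  have hp3 : 3 ≤ p := by have := hp.two_le; omega
  refine ⟨?_, ?_, ?_⟩
  · rw [Fintype.card_sum, Fintype.card_fin, hcard]; omega
  · set Φ : ZMod p × ZMod p × (Fin m → ZMod p) → (Fin (m + 2) ⊕ F → ZMod p) :=
      fun t => Sum.elim (Fin.cons t.1 (Fin.cons t.2.1 t.2.2))
        (fun x => t.2.1 * f x +
          Algebra.trace (ZMod p) F ((∑ i : Fin m, t.2.2 i • α ^ (i : ℕ)) * x)
          + t.2.1 + t.1) with hΦ
    have hrange : extCode p m F f α = Set.range Φ := by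
      ext v
      constructor
      · rintro ⟨c, a, aa, rfl⟩; exact ⟨(c, a, aa), rfl⟩
      · rintro ⟨⟨c, a, aa⟩, rfl⟩; exact ⟨c, a, aa, rfl⟩
    have hinj : Function.Injective Φ := by
      rintro ⟨c1, a1, aa1⟩ ⟨c2, a2, aa2⟩ h
      have h0 := congrFun h (Sum.inl 0)
      have h1 := congrFun h (Sum.inl (Fin.succ 0))
      have h2 : ∀ i : Fin m, aa1 i = aa2 i := fun i => by
        have := congrFun h (Sum.inl (Fin.succ (Fin.succ i)))
        simpa [hΦ] using this
      simp only [hΦ, Sum.elim_inl, Fin.cons_zero, Fin.cons_succ] at h0 h1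
      exact Prod.ext h0 (Prod.ext h1 (funext h2))
    rw [hrange, ← Nat.card_coe_set_eq, Nat.card_range_of_injective hinj]
    rw [Nat.card_eq_fintype_card, Fintype.card_prod, Fintype.card_prod,
      Fintype.card_fun, ZMod.card, Fintype.card_fin]
    rw [show m + 2 = 1 + (1 + m) by omega, pow_add, pow_add, pow_one]
  · rintro v ⟨c, a, aa, rfl⟩ hvne
    set k := (m + s - 1) / 2 with hkdef
    set b : F := ∑ i : Fin m, aa i • α ^ (i : ℕ) with hbdef
    have hA1 : 1 ≤ p ^ (m - 1) := Nat.one_le_pow _ _ (by omega)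
    have hC1 : 1 ≤ p ^ k := Nat.one_le_pow _ _ (by omega)
    have h3A : 3 * p ^ (m - 1) ≤ p ^ m := by
      calc 3 * p ^ (m - 1) ≤ p * p ^ (m - 1) := Nat.mul_le_mul_right _ hp3
        _ = p ^ m := by rw [← pow_succ']; congr 1; omega
    rw [st9_wt_sumElim]
    have hwtw : ∀ E : F → ZMod p,
        wtH E + (univ.filter (fun x : F => E x = 0)).card = p ^ m := by
      intro E
      have h := Finset.card_filter_add_card_filter_not
        (s := (univ : Finset F)) (p := fun x : F => E x = 0)
      rw [Finset.card_univ, hcard] at h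
      rw [wtH]
      simp only [ne_eq]
      omega
    by_cases haz : a = 0
    · subst haz
      by_cases haa : ∀ i, aa i = 0
      · have hb0 : b = 0 := by
          rw [hbdef]; exact Finset.sum_eq_zero fun i _ => by rw [haa i, zero_smul]
        have hc : c ≠ 0 := by
          intro hc0
          apply hvne
          funext i
          cases i with
          | inl j =>
            subst hc0
            simp only [Sum.elim_inl, Pi.zero_apply]
            refine Fin.cases ?_ (fun j2 => ?_) j
            · simp
            · refine Fin.cases ?_ (fun j3 => ?_) j2 <;> simp [haa]
          | inr x =>
            show (0 : ZMod p) * f x + Algebra.trace (ZMod p) F (b * x) + 0 + c = 0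
            rw [hb0, hc0]; simp
        have hwall : ∀ x : F,
            (0 : ZMod p) * f x + Algebra.trace (ZMod p) F (b * x) + 0 + c ≠ 0 := by
          intro x
          rw [hb0]
          simpa using hc
        have hwt2 : wtH (fun x : F => (0 : ZMod p) * f x
            + Algebra.trace (ZMod p) F (b * x) + 0 + c) = p ^ m := by
          rw [wtH, Finset.filter_true_of_mem (fun x _ => hwall x), Finset.card_univ, hcard]
        rw [hwt2]
        omega
      · push_neg at haa
        obtain ⟨i0, hi0⟩ := haa
        have hb : b ≠ 0 := by
          intro hb0
          have hli := st9_indep p m F hcard α hα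
          rw [Fintype.linearIndependent_iff] at hli
          exact hi0 (hli aa (by rw [← hbdef]; exact hb0) i0)
        have hcl := st9_count_lin p m F hcard b hb c
        have hfe : (univ.filter (fun x : F => (0 : ZMod p) * f x
              + Algebra.trace (ZMod p) F (b * x) + 0 + c = 0))
            = (univ.filter (fun x : F => Algebra.trace (ZMod p) F (b * x) + c = 0)) := by
          apply Finset.filter_congr; intro x _
          simp
        have hZ : (univ.filter (fun x : F => (0 : ZMod p) * f x
            + Algebra.trace (ZMod p) F (b * x) + 0 + c = 0)).card = p ^ (m - 1) := by
          rw [hfe]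
          have hpm : p ^ m = p ^ (m - 1) * p := by rw [← pow_succ]; congr 1; omega
          exact Nat.eq_of_mul_eq_mul_right (by omega) (hcl.trans hpm)
        have hw := hwtw (fun x : F => (0 : ZMod p) * f x
          + Algebra.trace (ZMod p) F (b * x) + 0 + c)
        have hone : 1 ≤ wtH (Fin.cons c (Fin.cons (0 : ZMod p) aa)) := by
          rw [wtH]
          refine Finset.card_pos.mpr ⟨Fin.succ (Fin.succ i0), ?_⟩
          simp [Fin.cons_succ, hi0]
        omega
    · have hcb := st9_count_bound p m s hp2 hm hpar F hcard f ε fstar hwr hbal a c haz b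
      obtain ⟨hZle, hZeq⟩ := hcb
      have hw := hwtw (fun x : F => a * f x + Algebra.trace (ZMod p) F (b * x) + a + c)
      have hone : 1 ≤ wtH (Fin.cons c (Fin.cons a aa)) := by
        rw [wtH]
        refine Finset.card_pos.mpr ⟨Fin.succ 0, ?_⟩
        simp [Fin.cons_succ, haz]
      have hpk1 : p ^ (k + 1) = p ^ k * p := by rw [pow_succ]
      have hpm : p ^ m = p ^ (m - 1) * p := by rw [← pow_succ]; congr 1; omega
      by_cases hbz : b = 0
      · have hZv := hZeq hbz
        have hZ : (univ.filter (fun x : F => a * f x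
            + Algebra.trace (ZMod p) F (b * x) + a + c = 0)).card = p ^ (m - 1) := by
          exact Nat.eq_of_mul_eq_mul_right (by omega) (hZv.trans hpm)
        omega
      · have hi0 : ∃ i, aa i ≠ 0 := by
          by_contra hno
          push_neg at hno
          exact hbz (by rw [hbdef]; exact Finset.sum_eq_zero fun i _ => by rw [hno i, zero_smul])
        obtain ⟨i0, hi0⟩ := hi0
        have htwo : 2 ≤ wtH (Fin.cons c (Fin.cons a aa)) := by
          rw [wtH]
          refine Finset.one_lt_card.mpr ⟨Fin.succ 0, ?_, Fin.succ (Fin.succ i0), ?_, ?_⟩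
          · simp [Fin.cons_succ, haz]
          · simp [Fin.cons_succ, hi0]
          · intro hcontr
            have := Fin.succ_injective _ hcontr
            exact (Fin.succ_ne_zero i0) this.symm
        have hZb : (univ.filter (fun x : F => a * f x
            + Algebra.trace (ZMod p) F (b * x) + a + c = 0)).card ≤ p ^ (m - 1) + p ^ k := by
          have h1 : (univ.filter (fun x : F => a * f x
              + Algebra.trace (ZMod p) F (b * x) + a + c = 0)).card * p
              ≤ (p ^ (m - 1) + p ^ k) * p := by
            rw [add_mul, ← hpm, ← hpk1]
            exact hZle
          exact Nat.le_of_mul_le_mul_right h1 (by omega)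
        omega
end

section
/- Let p be an odd prime, m a positive integer, and let s be an integer with 0 ≤ s ≤ m such that m+s ≥ 3. Let f : F_q → F_p be a weakly regular s-plateaued function with f(0) = 0. Then the dual (C̄_f')^⊥ of the extended code C̄_f' has length p^m + m + 2, dimension p^m, and minimum distance exactly 3. -/
open Finset

/-! ### Auxiliary lemmas for statement10 -/

open Finset in
private lemma aux_span_pow_top {K F : Type} [Field K] [Field F] [Fintype F] [Algebra K F]
    [Module.Finite K F] {α : F} (hα : ∀ x : F, x ≠ 0 → ∃ k : ℕ, x = α ^ k)
    {m : ℕ} (hm : Module.finrank K F ≤ m) :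
    Submodule.span K (Set.range fun i : Fin m => α ^ (i : ℕ)) = ⊤ := by
  classical
  have hint : IsIntegral K α := IsIntegral.of_finite K α
  have hspan := Submodule.span_range_natDegree_eq_adjoin (minpoly.monic hint) (minpoly.aeval K α)
  have hd : (minpoly K α).natDegree ≤ m := le_trans (minpoly.natDegree_le α) hm
  have hadj : Algebra.adjoin K {α} = ⊤ := by
    rw [eq_top_iff]
    intro x _
    by_cases hx : x = 0
    · rw [hx]; exact Subalgebra.zero_mem _
    · obtain ⟨k, rfl⟩ := hα x hx
      exact pow_mem (Algebra.self_mem_adjoin_singleton K α) k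
  rw [hadj] at hspan
  rw [eq_top_iff, ← Algebra.top_toSubmodule, ← hspan]
  refine Submodule.span_mono ?_
  intro y hy
  simp only [coe_image, Set.mem_image, mem_coe, mem_range] at hy
  obtain ⟨i, hi, rfl⟩ := hy
  exact ⟨⟨i, lt_of_lt_of_le hi hd⟩, rfl⟩

private lemma aux_trace_zero_of_pows {K F : Type} [Field K] [Field F] [Fintype F] [Algebra K F]
    [Module.Finite K F] [Algebra.IsSeparable K F] {α : F}
    (hα : ∀ x : F, x ≠ 0 → ∃ k : ℕ, x = α ^ k) {m : ℕ} (hm : Module.finrank K F ≤ m)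
    {z : F} (h : ∀ i : Fin m, Algebra.trace K F (α ^ (i : ℕ) * z) = 0) : z = 0 := by
  apply (traceForm_nondegenerate K F).1 z
  intro w
  have hext : (Algebra.traceForm K F) z = (0 : F →ₗ[K] K) := by
    apply LinearMap.ext_on (aux_span_pow_top hα hm)
    rintro _ ⟨i, rfl⟩
    simpa [Algebra.traceForm_apply, mul_comm] using h i
  rw [hext]
  rfl

private lemma mem_dualCode {n : Type} [Fintype n] {K : Type} [Field K] (S : Set (n → K))
    (u : n → K) : u ∈ dualCode S ↔ ∀ v ∈ S, ∑ i, u i * v i = 0 := Iff.rfl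

private lemma aux_cons_one {M : Type*} {m : ℕ} (c a : M) (aa : Fin m → M) :
    (Fin.cons c (Fin.cons a aa) : Fin (m + 2) → M) 1 = a := by
  rw [← Fin.succ_zero_eq_one, Fin.cons_succ, Fin.cons_zero]

noncomputable def Tmap (p m : ℕ) (F : Type) [Field F] [Fintype F] [Algebra (ZMod p) F]
    (f : F → ZMod p) (α : F) :
    ((Fin (m + 2) ⊕ F) → ZMod p) →ₗ[ZMod p] (Fin (m + 2) → ZMod p) where
  toFun u := Fin.cons (u (Sum.inl 0) + ∑ x : F, u (Sum.inr x))
    (Fin.cons (u (Sum.inl 1) + ∑ x : F, u (Sum.inr x) * f x + ∑ x : F, u (Sum.inr x))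
      (fun i => u (Sum.inl i.succ.succ) +
        ∑ x : F, u (Sum.inr x) * Algebra.trace (ZMod p) F (α ^ (i : ℕ) * x)))
  map_add' u v := by
    funext j
    refine Fin.cases ?_ (fun j => ?_) j
    · simp only [Pi.add_apply, Fin.cons_zero, Finset.sum_add_distrib]; ring
    · refine Fin.cases ?_ (fun i => ?_) j <;>
      · simp only [Pi.add_apply, Fin.cons_succ, Fin.cons_zero, add_mul,
          Finset.sum_add_distrib]
        ring
  map_smul' c u := by
    funext j
    refine Fin.cases ?_ (fun j => ?_) j
    · simp only [Pi.smul_apply, smul_eq_mul, Fin.cons_zero, RingHom.id_apply,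
        mul_add, Finset.mul_sum, mul_assoc]
    · refine Fin.cases ?_ (fun i => ?_) j <;>
      · simp only [Pi.smul_apply, smul_eq_mul, Fin.cons_succ, Fin.cons_zero,
          RingHom.id_apply, mul_add, Finset.mul_sum, mul_assoc]

section TmapLemmas

variable {p m : ℕ} {F : Type} [Field F] [Fintype F] [Algebra (ZMod p) F]
  {f : F → ZMod p} {α : F}

lemma Tmap_apply_zero (u : (Fin (m + 2) ⊕ F) → ZMod p) :
    Tmap p m F f α u 0 = u (Sum.inl 0) + ∑ x : F, u (Sum.inr x) := by
  simp [Tmap]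

lemma Tmap_apply_one (u : (Fin (m + 2) ⊕ F) → ZMod p) :
    Tmap p m F f α u 1 = u (Sum.inl 1) + ∑ x : F, u (Sum.inr x) * f x
      + ∑ x : F, u (Sum.inr x) := by
  rw [show (1 : Fin (m + 2)) = (0 : Fin (m + 1)).succ from Fin.succ_zero_eq_one.symm]
  simp [Tmap]

lemma Tmap_apply_ss (u : (Fin (m + 2) ⊕ F) → ZMod p) (i : Fin m) :
    Tmap p m F f α u i.succ.succ = u (Sum.inl i.succ.succ) +
      ∑ x : F, u (Sum.inr x) * Algebra.trace (ZMod p) F (α ^ (i : ℕ) * x) := by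
  simp [Tmap]

open Finset in
lemma sum_mul_extCode (u : (Fin (m + 2) ⊕ F) → ZMod p) (c a : ZMod p)
    (aa : Fin m → ZMod p) :
    ∑ i, u i * (Sum.elim (Fin.cons c (Fin.cons a aa))
      (fun x => a * f x +
        Algebra.trace (ZMod p) F ((∑ i : Fin m, aa i • α ^ (i : ℕ)) * x) + a + c)) i
    = c * Tmap p m F f α u 0 + a * Tmap p m F f α u 1
      + ∑ i : Fin m, aa i * Tmap p m F f α u i.succ.succ := by
  classical
  have hb : ∀ x : F, Algebra.trace (ZMod p) F ((∑ i : Fin m, aa i • α ^ (i : ℕ)) * x)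
      = ∑ i : Fin m, aa i * Algebra.trace (ZMod p) F (α ^ (i : ℕ) * x) := by
    intro x
    rw [Finset.sum_mul, map_sum]
    refine Finset.sum_congr rfl fun i _ => ?_
    rw [smul_mul_assoc, map_smul, smul_eq_mul]
  rw [Fintype.sum_sum_type]
  simp only [Sum.elim_inl, Sum.elim_inr]
  simp only [Fin.sum_univ_succ (n := m + 1), Fin.sum_univ_succ (n := m),
    Fin.cons_succ, Fin.cons_zero, Fin.succ_zero_eq_one, hb]
  have step : ∀ x : F, u (Sum.inr x) *
      (a * f x + (∑ i : Fin m, aa i * Algebra.trace (ZMod p) F (α ^ (i : ℕ) * x)) + a + c)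
      = a * (u (Sum.inr x) * f x)
        + (∑ i : Fin m, aa i * (u (Sum.inr x) * Algebra.trace (ZMod p) F (α ^ (i : ℕ) * x)))
        + a * u (Sum.inr x) + c * u (Sum.inr x) := by
    intro x
    have h2 : u (Sum.inr x) * (∑ i : Fin m, aa i * Algebra.trace (ZMod p) F (α ^ (i : ℕ) * x))
        = ∑ i : Fin m, aa i * (u (Sum.inr x) * Algebra.trace (ZMod p) F (α ^ (i : ℕ) * x)) := by
      rw [Finset.mul_sum]
      exact Finset.sum_congr rfl fun i _ => by ring
    rw [mul_add, mul_add, mul_add, h2]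
    ring
  rw [Finset.sum_congr rfl fun x _ => step x]
  simp only [Finset.sum_add_distrib]
  rw [← Finset.mul_sum, ← Finset.mul_sum, ← Finset.mul_sum]
  have hsw : ∑ x : F, ∑ i : Fin m,
        aa i * (u (Sum.inr x) * Algebra.trace (ZMod p) F (α ^ (i : ℕ) * x))
      = ∑ i : Fin m, aa i * ∑ x : F,
        u (Sum.inr x) * Algebra.trace (ZMod p) F (α ^ (i : ℕ) * x) := by
    rw [Finset.sum_comm]
    exact Finset.sum_congr rfl fun i _ => by rw [Finset.mul_sum]
  rw [hsw]
  rw [show ∑ i : Fin m, u (Sum.inl i.succ.succ) * aa i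
      = ∑ i : Fin m, aa i * u (Sum.inl i.succ.succ) from
    Finset.sum_congr rfl fun i _ => mul_comm _ _]
  simp only [Tmap_apply_zero, Tmap_apply_one, Tmap_apply_ss, mul_add,
    Finset.sum_add_distrib]
  ring

open Finset in
lemma dual_eq_ker [Fact p.Prime] (f : F → ZMod p) (α : F) :
    dualCode (extCode p m F f α) = LinearMap.ker (Tmap p m F f α) := by
  classical
  ext u
  rw [LinearMap.mem_ker, mem_dualCode]
  constructor
  · intro hu
    have h0 := hu _ ⟨1, 0, fun _ => 0, rfl⟩
    have h1 := hu _ ⟨0, 1, fun _ => 0, rfl⟩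
    have hk : ∀ k : Fin m, Tmap p m F f α u k.succ.succ = 0 := by
      intro k
      have h2 := hu _ ⟨0, 0, Pi.single k 1, rfl⟩
      rw [sum_mul_extCode] at h2
      simpa [Pi.single_apply, ite_mul] using h2
    rw [sum_mul_extCode] at h0 h1
    simp only [one_mul, zero_mul, mul_zero, zero_add, add_zero,
      Finset.sum_const_zero] at h0 h1
    funext j
    rw [Pi.zero_apply]
    refine Fin.cases ?_ (fun j => ?_) j
    · exact h0
    · refine Fin.cases ?_ (fun i => ?_) j
      · rw [Fin.succ_zero_eq_one]; exact h1
      · exact hk i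
  · intro hT v hv
    obtain ⟨c, a, aa, rfl⟩ := hv
    rw [sum_mul_extCode, hT]
    simp

lemma Tmap_surjective : Function.Surjective (Tmap p m F f α) := by
  intro y
  refine ⟨Sum.elim y 0, ?_⟩
  funext j
  refine Fin.cases ?_ (fun j => ?_) j
  · simp [Tmap]
  · refine Fin.cases ?_ (fun i => ?_) j <;> simp [Tmap, Fin.succ_zero_eq_one]

end TmapLemmas

theorem statement10 (p m s : ℕ) [Fact p.Prime] (hp2 : p ≠ 2) (hm : 1 ≤ m) (hs : s ≤ m)
    (hms : 3 ≤ m + s)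
    (F : Type) [Field F] [Fintype F] [Algebra (ZMod p) F]
    (hcard : Fintype.card F = p ^ m)
    (α : F) (hα : ∀ x : F, x ≠ 0 → ∃ k : ℕ, x = α ^ k)
    (f : F → ZMod p) (hf0 : f 0 = 0) (ε : ℤ) (fstar : F → ZMod p)
    (hwr : IsWeaklyRegularPlateaued p m s F f ε fstar) :
    Fintype.card (Fin (m + 2) ⊕ F) = p ^ m + m + 2 ∧
    Module.finrank (ZMod p) (dualCode (extCode p m F f α)) = p ^ m ∧
    hasMinDist (dualCode (extCode p m F f α) : Set (Fin (m + 2) ⊕ F → ZMod p)) 3 := by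
  classical
  haveI : Module.Finite (ZMod p) F := Module.finite_iff_finite.mpr inferInstance
  have hfr : Module.finrank (ZMod p) F = m := by
    have hc := Module.card_eq_pow_finrank (K := ZMod p) (V := F)
    rw [ZMod.card, hcard] at hc
    exact (Nat.pow_right_injective (Fact.out : p.Prime).two_le hc.symm)
  have hone : (1 : ZMod p) ≠ 0 := one_ne_zero
  have hneg : (-1 : ZMod p) ≠ 0 := neg_ne_zero.mpr hone
  have h01 : (0 : Fin (m + 2)) ≠ 1 := by
    simp [Fin.ext_iff]
  have hcardn : Fintype.card (Fin (m + 2) ⊕ F) = p ^ m + m + 2 := by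
    rw [Fintype.card_sum, Fintype.card_fin, hcard]; omega
  refine ⟨hcardn, ?_, ?_, ?_⟩
  · -- dimension
    rw [dual_eq_ker]
    have hrn := LinearMap.finrank_range_add_finrank_ker (Tmap p m F f α)
    rw [LinearMap.range_eq_top.mpr Tmap_surjective, finrank_top] at hrn
    have e1 : Module.finrank (ZMod p) (Fin (m + 2) → ZMod p) = m + 2 := by
      rw [Module.finrank_pi]; exact Fintype.card_fin _
    have e2 : Module.finrank (ZMod p) ((Fin (m + 2) ⊕ F) → ZMod p) = p ^ m + m + 2 := by
      rw [Module.finrank_pi, hcardn]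
    rw [e1, e2] at hrn
    omega
  · -- existence of a weight-3 dual codeword
    set uu : (Fin (m + 2) ⊕ F) → ZMod p :=
      Pi.single (Sum.inl 0) 1 + Pi.single (Sum.inl 1) 1 + Pi.single (Sum.inr 0) (-1)
      with huu
    have key : ∀ (b : Fin (m + 2) ⊕ F) (cc : ZMod p) (v : (Fin (m + 2) ⊕ F) → ZMod p),
        ∑ i, (Pi.single b cc : (Fin (m + 2) ⊕ F) → ZMod p) i * v i = cc * v b := by
      intro b cc v
      rw [Fintype.sum_eq_single b (fun x hx => by rw [Pi.single_eq_of_ne hx, zero_mul]),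
        Pi.single_eq_same]
    have v1 : uu (Sum.inl 0) = 1 := by
      simp [huu, Pi.single_apply, h01]
    have v2 : uu (Sum.inl 1) = 1 := by
      simp [huu, Pi.single_apply, h01.symm]
    have v3 : uu (Sum.inr 0) = -1 := by
      simp [huu, Pi.single_apply]
    have v4 : ∀ i, i ≠ Sum.inl 0 → i ≠ Sum.inl 1 → i ≠ Sum.inr 0 → uu i = 0 := by
      intro i hi1 hi2 hi3
      simp [huu, Pi.single_eq_of_ne hi1, Pi.single_eq_of_ne hi2, Pi.single_eq_of_ne hi3]
    refine ⟨uu, ?_, ?_, ?_⟩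
    · rw [SetLike.mem_coe, mem_dualCode]
      rintro v ⟨c, a, aa, rfl⟩
      simp only [huu, Pi.add_apply, add_mul, Finset.sum_add_distrib, key]
      simp only [Sum.elim_inl, Sum.elim_inr, Fin.cons_zero, aux_cons_one,
        hf0, mul_zero, map_zero]
      ring
    · intro h
      rw [h, Pi.zero_apply] at v1
      exact hone v1.symm
    · have hset : Finset.univ.filter (fun i => uu i ≠ 0)
          = {Sum.inl 0, Sum.inl 1, Sum.inr 0} := by
        ext i
        simp only [Finset.mem_filter, Finset.mem_univ, true_and, Finset.mem_insert,
          Finset.mem_singleton]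
        constructor
        · intro hne
          by_contra hcon
          push_neg at hcon
          exact hne (v4 i hcon.1 hcon.2.1 hcon.2.2)
        · rintro (rfl | rfl | rfl)
          · rw [v1]; exact hone
          · rw [v2]; exact hone
          · rw [v3]; exact hneg
      rw [wtH, hset]
      rw [Finset.card_insert_of_notMem (by simp [h01]),
        Finset.card_insert_of_notMem (by simp), Finset.card_singleton]
  · -- minimum distance lower bound
    intro v hv hvne
    rw [SetLike.mem_coe, dual_eq_ker, LinearMap.mem_ker] at hv
    have e0 := congrFun hv 0
    rw [Tmap_apply_zero, Pi.zero_apply] at e0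
    have e1 := congrFun hv 1
    rw [Tmap_apply_one, Pi.zero_apply] at e1
    have ei : ∀ i : Fin m, v (Sum.inl i.succ.succ)
        + ∑ x : F, v (Sum.inr x) * Algebra.trace (ZMod p) F (α ^ (i : ℕ) * x) = 0 := by
      intro i
      have h := congrFun hv i.succ.succ
      rwa [Tmap_apply_ss, Pi.zero_apply] at h
    by_contra hlt
    push_neg at hlt
    set SL := Finset.univ.filter (fun j : Fin (m + 2) => v (Sum.inl j) ≠ 0) with hSL
    set SR := Finset.univ.filter (fun x : F => v (Sum.inr x) ≠ 0) with hSR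
    have hsplit : wtH v = SL.card + SR.card := by
      rw [wtH, Finset.card_filter, Fintype.sum_sum_type, hSL, hSR,
        Finset.card_filter, Finset.card_filter]
    have hR0 : ∀ x : F, x ∉ SR → v (Sum.inr x) = 0 := by
      intro x hx
      by_contra h
      exact hx (Finset.mem_filter.mpr ⟨Finset.mem_univ x, h⟩)
    have hL0 : ∀ j, j ∉ SL → v (Sum.inl j) = 0 := by
      intro j hj
      by_contra h
      exact hj (Finset.mem_filter.mpr ⟨Finset.mem_univ j, h⟩)
    obtain h0' | h1' | h2' : SR.card = 0 ∨ SR.card = 1 ∨ SR.card = 2 := by omega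
    · -- no nonzero coordinates on the right
      have hRz : ∀ x : F, v (Sum.inr x) = 0 := by
        intro x
        refine hR0 x ?_
        rw [Finset.card_eq_zero.mp h0']
        exact Finset.notMem_empty x
      have hsum0 : ∀ g : F → ZMod p, ∑ x : F, v (Sum.inr x) * g x = 0 :=
        fun g => Finset.sum_eq_zero fun x _ => by rw [hRz, zero_mul]
      have hsum0' : ∑ x : F, v (Sum.inr x) = 0 := Finset.sum_eq_zero fun x _ => hRz x
      have hAz : ∀ j : Fin (m + 2), v (Sum.inl j) = 0 := by
        intro j
        refine Fin.cases ?_ (fun j => ?_) j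
        · rw [hsum0', add_zero] at e0; exact e0
        · refine Fin.cases ?_ (fun i => ?_) j
          · rw [Fin.succ_zero_eq_one]
            rw [hsum0' , hsum0 f, add_zero, add_zero] at e1
            exact e1
          · have h := ei i
            rw [hsum0 _, add_zero] at h
            exact h
      refine hvne (funext fun i => ?_)
      cases i with
      | inl j => simpa using hAz j
      | inr x => simpa using hRz x
    · -- exactly one nonzero right coordinate
      obtain ⟨x0, hx0⟩ := Finset.card_eq_one.mp h1'
      have hx0m : x0 ∈ SR := by rw [hx0]; exact Finset.mem_singleton_self x0
      have ht : v (Sum.inr x0) ≠ 0 := (Finset.mem_filter.mp hx0m).2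
      have houtside : ∀ b : F, b ≠ x0 → v (Sum.inr b) = 0 := by
        intro b hb
        refine hR0 b ?_
        rw [hx0, Finset.mem_singleton]
        exact hb
      have hsum1 : ∀ g : F → ZMod p,
          ∑ x : F, v (Sum.inr x) * g x = v (Sum.inr x0) * g x0 :=
        fun g => Fintype.sum_eq_single x0 (fun b hb => by rw [houtside b hb, zero_mul])
      have hsum1' : ∑ x : F, v (Sum.inr x) = v (Sum.inr x0) :=
        Fintype.sum_eq_single x0 (fun b hb => houtside b hb)
      rw [hsum1'] at e0
      have h0mem : (0 : Fin (m + 2)) ∈ SL := by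
        refine Finset.mem_filter.mpr ⟨Finset.mem_univ _, ?_⟩
        intro h
        rw [h, zero_add] at e0
        exact ht e0
      have hSLeq : SL = {0} := by
        have hcard1 : SL.card = 1 :=
          le_antisymm (by omega) (Finset.card_pos.mpr ⟨0, h0mem⟩)
        obtain ⟨j0, hj0⟩ := Finset.card_eq_one.mp hcard1
        rw [hj0] at h0mem ⊢
        rw [Finset.mem_singleton] at h0mem
        rw [h0mem]
      have hLz : ∀ j : Fin (m + 2), j ≠ 0 → v (Sum.inl j) = 0 := by
        intro j hj
        refine hL0 j ?_
        rw [hSLeq, Finset.mem_singleton]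
        exact hj
      have h1ne : (1 : Fin (m + 2)) ≠ 0 := fun h => h01 h.symm
      rw [hsum1 f, hsum1', hLz 1 h1ne, zero_add] at e1
      have hfx0 : f x0 = -1 := by
        have hfac : v (Sum.inr x0) * (f x0 + 1) = 0 := by
          rw [mul_add, mul_one]; exact e1
        rcases mul_eq_zero.mp hfac with h | h
        · exact absurd h ht
        · linear_combination h
      have hx00 : x0 = 0 := by
        refine aux_trace_zero_of_pows hα (le_of_eq hfr) ?_
        intro i
        have h := ei i
        rw [hsum1 _, hLz _ (Fin.succ_ne_zero _), zero_add] at h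
        exact (mul_eq_zero.mp h).resolve_left ht
      rw [hx00, hf0] at hfx0
      exact hneg hfx0.symm
    · -- exactly two nonzero right coordinates
      have hSL0 : SL.card = 0 := by omega
      have hLz : ∀ j : Fin (m + 2), v (Sum.inl j) = 0 := by
        intro j
        refine hL0 j ?_
        rw [Finset.card_eq_zero.mp hSL0]
        exact Finset.notMem_empty j
      obtain ⟨x0, y0, hxy, hxy2⟩ := Finset.card_eq_two.mp h2'
      have htx : v (Sum.inr x0) ≠ 0 :=
        (Finset.mem_filter.mp (show x0 ∈ SR by rw [hxy2]; simp)).2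
      have hsum2 : ∀ g : F → ZMod p, ∑ x : F, v (Sum.inr x) * g x
          = v (Sum.inr x0) * g x0 + v (Sum.inr y0) * g y0 := by
        intro g
        rw [← Finset.sum_subset (Finset.subset_univ SR)
          (fun x _ hx => by rw [hR0 x hx, zero_mul]), hxy2, Finset.sum_pair hxy]
      have hsum2' : ∑ x : F, v (Sum.inr x) = v (Sum.inr x0) + v (Sum.inr y0) := by
        rw [← Finset.sum_subset (Finset.subset_univ SR) (fun x _ hx => hR0 x hx),
          hxy2, Finset.sum_pair hxy]
      rw [hLz 0, zero_add, hsum2'] at e0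
      have hyv : v (Sum.inr y0) = -v (Sum.inr x0) := by linear_combination e0
      refine hxy ?_
      have hsub : x0 - y0 = 0 := by
        refine aux_trace_zero_of_pows hα (le_of_eq hfr) ?_
        intro i
        have h := ei i
        rw [hsum2 _, hLz _, zero_add, hyv] at h
        have hfac : v (Sum.inr x0) * (Algebra.trace (ZMod p) F (α ^ (i : ℕ) * x0)
            - Algebra.trace (ZMod p) F (α ^ (i : ℕ) * y0)) = 0 := by
          linear_combination h
        have h2 := (mul_eq_zero.mp hfac).resolve_left htx
        rw [mul_sub, map_sub]
        exact h2
      exact sub_eq_zero.mp hsub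
end

section
/- Let m ≥ 2 be an integer and let s be an integer with 0 ≤ s ≤ m−2 such that m+s is even, and let f : F_q → F_2 (q = 2^m) be an s-plateaued Boolean function with f(0) = 0. Then the binary code C̄_f has length 2^m, dimension m+2, and minimum distance 2^{m−1} − 2^{(m+s−2)/2}, and its nonzero weights and the numbers of codewords of each weight are: weight 2^{m−1} − 2^{(m+s−2)/2} with frequency 2^{m−s}; weight 2^{m−1} + 2^{(m+s−2)/2} with frequency 2^{m−s}; weight 2^{m−1} with frequency 2^{m+2} − 2^{m−s+1} − 2; and weight 2^m with frequency 1. -/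
open Finset

namespace KAux

open Finset

lemma zmod2_cases (a : ZMod 2) : a = 0 ∨ a = 1 := by revert a; decide

lemma sgn_add (a b : ZMod 2) : ((-1:ℤ)) ^ (a + b).val = (-1)^a.val * (-1)^b.val := by
  revert a b; decide

lemma sgn_succ (a : ZMod 2) : ((-1:ℤ)) ^ (a + 1).val = -(-1)^a.val := by
  revert a; decide

lemma sgn_eq (a : ZMod 2) : ((-1:ℤ)) ^ a.val = 1 - 2 * (if a ≠ 0 then 1 else 0) := by
  revert a; decide

lemma sgn_mul_self (a : ZMod 2) : ((-1:ℤ)) ^ a.val * (-1)^a.val = 1 := by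
  revert a; decide

set_option linter.unusedSectionVars false

variable {F : Type} [Field F] [Fintype F] [Algebra (ZMod 2) F]

lemma sum_sign_eq (g : F → ZMod 2) :
    ∑ x, ((-1:ℤ)) ^ (g x).val = (Fintype.card F : ℤ) - 2 * (wtH g : ℤ) := by
  classical
  rw [wtH]
  calc ∑ x, ((-1:ℤ)) ^ (g x).val
      = ∑ x : F, ((1:ℤ) - 2 * (if g x ≠ 0 then 1 else 0)) :=
        Finset.sum_congr rfl (fun x _ => sgn_eq _)
    _ = _ := by
        rw [Finset.sum_sub_distrib, ← Finset.mul_sum, Finset.sum_boole]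
        simp

lemma wt0_iff (g : F → ZMod 2) : wtH g = 0 ↔ g = 0 := by
  classical
  rw [wtH, Finset.card_eq_zero, Finset.filter_eq_empty_iff]
  constructor
  · intro h; funext x; have := h (Finset.mem_univ x); simpa using this
  · intro h x _; simp [h]

lemma sum_sign_zero (g : F → ZMod 2) (x0 : F) (h : ∀ x, g (x + x0) = g x + 1) :
    ∑ x, ((-1:ℤ)) ^ (g x).val = 0 := by
  have key : ∑ x : F, ((-1:ℤ)) ^ (g (x + x0)).val = ∑ x : F, ((-1:ℤ)) ^ (g x).val :=
    Fintype.sum_equiv (Equiv.addRight x0) _ _ (fun x => rfl)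
  have key2 : ∑ x : F, ((-1:ℤ)) ^ (g (x + x0)).val = - ∑ x : F, ((-1:ℤ)) ^ (g x).val := by
    rw [← Finset.sum_neg_distrib]
    exact Finset.sum_congr rfl (fun x _ => by rw [h x, sgn_succ])
  linarith [key, key2]

lemma trace_exists (z : F) (hz : z ≠ 0) : ∃ x, Algebra.trace (ZMod 2) F (z * x) = 1 := by
  have h := traceForm_nondegenerate (ZMod 2) F
  by_contra hc
  push_neg at hc
  refine hz (h.1 z (fun x => ?_))
  have h2 := hc x
  simp only [Algebra.traceForm_apply]
  rcases zmod2_cases (Algebra.trace (ZMod 2) F (z * x)) with h3 | h3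
  · exact h3
  · exact absurd h3 h2

lemma eq_of_trace_eq (b b' : F)
    (h : ∀ x, Algebra.trace (ZMod 2) F (b * x) = Algebra.trace (ZMod 2) F (b' * x)) :
    b = b' := by
  by_contra hne
  obtain ⟨x, hx⟩ := trace_exists (b - b') (sub_ne_zero.mpr hne)
  rw [sub_mul, map_sub, h x, sub_self] at hx
  exact one_ne_zero hx.symm

lemma sum_char (z : F) (hz : z ≠ 0) :
    ∑ x : F, ((-1:ℤ)) ^ (Algebra.trace (ZMod 2) F (z * x)).val = 0 := by
  obtain ⟨x0, hx0⟩ := trace_exists z hz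
  exact sum_sign_zero _ x0 (fun x => by rw [mul_add, map_add, hx0])

lemma sum_char' [DecidableEq F] (z : F) :
    ∑ b : F, ((-1:ℤ)) ^ (Algebra.trace (ZMod 2) F (b * z)).val
      = if z = 0 then (Fintype.card F : ℤ) else 0 := by
  split_ifs with h
  · subst h; simp
  · rw [← sum_char z h]
    exact Finset.sum_congr rfl (fun b _ => by rw [mul_comm])

lemma parseval (f : F → ZMod 2) :
    ∑ b : F, (walsh2 F f b)^2 = (Fintype.card F : ℤ)^2 := by
  classical
  haveI : CharP F 2 := charP_of_injective_algebraMap (algebraMap (ZMod 2) F).injective 2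
  have step1 : ∑ b : F, (walsh2 F f b)^2
      = ∑ b : F, ∑ x : F, ∑ y : F,
        ((-1:ℤ)) ^ ((f x + Algebra.trace (ZMod 2) F (b * x)).val)
        * ((-1:ℤ)) ^ ((f y + Algebra.trace (ZMod 2) F (b * y)).val) := by
    refine Finset.sum_congr rfl (fun b _ => ?_)
    rw [walsh2, sq, Finset.sum_mul_sum]
  rw [step1, Finset.sum_comm]
  have step2 : ∀ x : F, ∑ b : F, ∑ y : F,
        ((-1:ℤ)) ^ ((f x + Algebra.trace (ZMod 2) F (b * x)).val)
        * ((-1:ℤ)) ^ ((f y + Algebra.trace (ZMod 2) F (b * y)).val)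
      = (Fintype.card F : ℤ) := by
    intro x
    rw [Finset.sum_comm]
    have inner : ∀ y : F, ∑ b : F,
        ((-1:ℤ)) ^ ((f x + Algebra.trace (ZMod 2) F (b * x)).val)
        * ((-1:ℤ)) ^ ((f y + Algebra.trace (ZMod 2) F (b * y)).val)
        = if y = x then (Fintype.card F : ℤ) else 0 := by
      intro y
      have hb : ∀ b : F,
          ((-1:ℤ)) ^ ((f x + Algebra.trace (ZMod 2) F (b * x)).val)
          * ((-1:ℤ)) ^ ((f y + Algebra.trace (ZMod 2) F (b * y)).val)
          = ((-1:ℤ)) ^ (f x).val * (-1) ^ (f y).val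
            * ((-1:ℤ)) ^ ((Algebra.trace (ZMod 2) F (b * (x + y))).val) := by
        intro b
        rw [mul_add, map_add, sgn_add, sgn_add, sgn_add]
        ring
      rw [Finset.sum_congr rfl (fun b _ => hb b), ← Finset.mul_sum, sum_char']
      by_cases h : y = x
      · subst h
        simp [CharTwo.add_self_eq_zero, sgn_mul_self]
      · have hxy : x + y ≠ 0 := by
          intro h0
          apply h
          have hy : y = -x := by linear_combination h0
          rw [hy, CharTwo.neg_eq]
        simp [hxy, h]
    rw [Finset.sum_congr rfl (fun y _ => inner y), Finset.sum_ite_eq' Finset.univ x]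
    simp
  rw [Finset.sum_congr rfl (fun x _ => step2 x)]
  rw [Finset.sum_const, Finset.card_univ, sq]
  simp [mul_comm]

lemma walsh_cases {m s k : ℕ} {f : F → ZMod 2} (hpl : IsPlateaued2 m s F f)
    (hk : m + s = k + k) (b : F) :
    walsh2 F f b = 0 ∨ walsh2 F f b = 2^k ∨ walsh2 F f b = -2^k := by
  rcases hpl b with h | h
  · exact Or.inl (by exact pow_eq_zero_iff (n := 2) (by norm_num) |>.mp h)
  · rw [hk] at h
    have h2 : (walsh2 F f b - 2^k) * (walsh2 F f b + 2^k) = 0 := by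
      linear_combination h
    rcases mul_eq_zero.mp h2 with h3 | h3
    · exact Or.inr (Or.inl (by linarith))
    · exact Or.inr (Or.inr (by linarith))

lemma no_affine {m s : ℕ} (hsm : s < m) {f : F → ZMod 2} (hpl : IsPlateaued2 m s F f)
    (hcard : Fintype.card F = 2^m) (z : F) :
    ∃ x, f x ≠ Algebra.trace (ZMod 2) F (z * x) := by
  by_contra hc
  push_neg at hc
  have hw : walsh2 F f z = (2^m : ℤ) := by
    rw [walsh2]
    have hval : ∀ x : F, ((-1:ℤ)) ^ ((f x + Algebra.trace (ZMod 2) F (z * x)).val) = 1 := by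
      intro x
      rw [hc x]
      have h0 : Algebra.trace (ZMod 2) F (z * x) + Algebra.trace (ZMod 2) F (z * x) = 0 :=
        (by decide : ∀ a : ZMod 2, a + a = 0) _
      rw [h0]
      norm_num [ZMod.val_zero]
    rw [Finset.sum_congr rfl (fun x _ => hval x), Finset.sum_const, Finset.card_univ, hcard]
    norm_num
  rcases hpl z with h | h <;> rw [hw] at h
  · have : (0:ℤ) < (2:ℤ)^m := by positivity
    nlinarith
  · have h2 : ((2:ℤ)^m)^2 = 2^(m+m) := by rw [← pow_mul]; ring_nf
    rw [h2] at h
    have h3 : ((2:ℤ))^(m+s) < 2^(m+m) :=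
      pow_lt_pow_right₀ (by norm_num : (1:ℤ) < 2) (by omega : m + s < m + m)
    omega

lemma wt_eq_of {g : F → ZMod 2} {w : ℕ}
    (h : 2 * (w:ℤ) = (Fintype.card F:ℤ) - ∑ x : F, ((-1:ℤ)) ^ ((g x).val)) : wtH g = w := by
  have h1 := sum_sign_eq g
  have : (wtH g : ℤ) = (w : ℤ) := by linarith
  exact_mod_cast this

end KAux

/-- The parametrization map for `codeCbar 2`. -/
noncomputable def Pmap (F : Type) [Field F] [Fintype F] [Algebra (ZMod 2) F]
    (f : F → ZMod 2) (p : ZMod 2 × F × ZMod 2) : F → ZMod 2 :=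
  fun x => p.1 * f x + Algebra.trace (ZMod 2) F (p.2.1 * x) + p.2.2


/-- Parameters of codewords of weight `w`. -/
noncomputable def Qset (F : Type) [Field F] [Fintype F] [Algebra (ZMod 2) F]
    (f : F → ZMod 2) (w : ℕ) : Finset (ZMod 2 × F × ZMod 2) :=
  Finset.univ.filter (fun p => wtH (Pmap F f p) = w)

lemma mem_Qset {F : Type} [Field F] [Fintype F] [Algebra (ZMod 2) F]
    {f : F → ZMod 2} {w : ℕ} {p : ZMod 2 × F × ZMod 2} :
    p ∈ Qset F f w ↔ wtH (Pmap F f p) = w := by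
  rw [Qset, Finset.mem_filter]
  simp

theorem statement12 (m s : ℕ) (hm : 2 ≤ m) (hs : s ≤ m - 2) (hpar : Even (m + s))
    (F : Type) [Field F] [Fintype F] [Algebra (ZMod 2) F]
    (hcard : Fintype.card F = 2 ^ m)
    (f : F → ZMod 2) (hf0 : f 0 = 0) (hpl : IsPlateaued2 m s F f) :
    Set.ncard (codeCbar 2 F f) = 2 ^ (m + 2) ∧
    hasMinDist (codeCbar 2 F f) (2 ^ (m - 1) - 2 ^ ((m + s - 2) / 2)) ∧
    Set.ncard {v ∈ codeCbar 2 F f | wtH v = 2 ^ (m - 1) - 2 ^ ((m + s - 2) / 2)}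
      = 2 ^ (m - s) ∧
    Set.ncard {v ∈ codeCbar 2 F f | wtH v = 2 ^ (m - 1) + 2 ^ ((m + s - 2) / 2)}
      = 2 ^ (m - s) ∧
    Set.ncard {v ∈ codeCbar 2 F f | wtH v = 2 ^ (m - 1)}
      = 2 ^ (m + 2) - 2 ^ (m - s + 1) - 2 ∧
    Set.ncard {v ∈ codeCbar 2 F f | wtH v = 2 ^ m} = 1 := by
  classical
  obtain ⟨k, hk⟩ := hpar
  have hsm : s + 2 ≤ m := by omega
  have hk1 : 1 ≤ k := by omega
  have hkm : k ≤ m - 1 := by omega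
  -- power facts
  have E1 : 2^m = 2*2^(m-1) := by
    rw [← pow_succ']; congr 1; omega
  have E2 : 2^k = 2*2^(k-1) := by
    rw [← pow_succ']; congr 1; omega
  have E3 : 2^(k-1) < 2^(m-1) := Nat.pow_lt_pow_right (by norm_num) (by omega)
  have E4 : 2^(m+2) = 4*2^m := by rw [pow_add]; ring
  have E5 : 2^(m-s+1) = 2*2^(m-s) := by rw [← pow_succ']
  have E6 : 0 < 2^(m-s) := by positivity
  have E7 : 0 < 2^(k-1) := by positivity
  have E8 : (m+s-2)/2 = k - 1 := by omega
  have E9 : 0 < 2^(m-1) := by positivity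
  have Z1 : ((2:ℤ))^m = 2*2^(m-1) := by exact_mod_cast E1
  have Z2 : ((2:ℤ))^k = 2*2^(k-1) := by exact_mod_cast E2
  have Zk : ((2:ℤ))^k ≠ 0 := by positivity
  simp only [E8]
  -- range description
  have hrange : codeCbar 2 F f = Set.range (Pmap F f) := by
    ext v
    simp only [codeCbar, Set.mem_setOf_eq, Set.mem_range]
    constructor
    · rintro ⟨a, c, b, rfl⟩; exact ⟨(a, b, c), rfl⟩
    · rintro ⟨⟨a, b, c⟩, rfl⟩; exact ⟨a, c, b, rfl⟩
  -- injectivity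
  have hinj : Function.Injective (Pmap F f) := by
    rintro ⟨a, b, c⟩ ⟨a', b', c'⟩ h
    have h0 := congrFun h 0
    simp only [Pmap, hf0, mul_zero, map_zero, add_zero, zero_add] at h0
    subst h0
    have hx : ∀ x, a * f x + Algebra.trace (ZMod 2) F (b * x)
        = a' * f x + Algebra.trace (ZMod 2) F (b' * x) := by
      intro x
      have := congrFun h x
      simp only [Pmap] at this
      exact add_right_cancel this
    have heq : a = a' ∧ b = b' := by
      rcases KAux.zmod2_cases a with ha | ha <;> rcases KAux.zmod2_cases a' with ha' | ha' <;>
        subst ha <;> subst ha'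
      · refine ⟨rfl, KAux.eq_of_trace_eq b b' (fun x => ?_)⟩
        have := hx x; simpa using this
      · exfalso
        obtain ⟨x, hxne⟩ := KAux.no_affine (by omega : s < m) hpl hcard (b - b')
        apply hxne
        have := hx x
        simp only [zero_mul, zero_add, one_mul] at this
        rw [sub_mul, map_sub]
        rw [this]; ring
      · exfalso
        obtain ⟨x, hxne⟩ := KAux.no_affine (by omega : s < m) hpl hcard (b' - b)
        apply hxne
        have := hx x
        simp only [zero_mul, zero_add, one_mul] at this
        rw [sub_mul, map_sub]
        rw [← this]; ring
      · refine ⟨rfl, KAux.eq_of_trace_eq b b' (fun x => ?_)⟩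
        have := hx x
        simp only [one_mul] at this
        exact add_left_cancel this
    exact Prod.ext heq.1 (Prod.ext heq.2 rfl)
  -- sign sums of codewords
  have hsum : ∀ a b (c : ZMod 2), ∑ x : F, ((-1:ℤ))^((Pmap F f (a, b, c) x).val)
      = (-1)^(c.val) * ∑ x : F, ((-1:ℤ))^((a * f x + Algebra.trace (ZMod 2) F (b * x)).val) := by
    intro a b c
    simp only [Pmap]
    rw [Finset.sum_congr rfl (fun x _ => KAux.sgn_add (a * f x + Algebra.trace (ZMod 2) F (b * x)) c),
      ← Finset.sum_mul]
    ring
  have hW1 : ∀ b : F, ∑ x : F, ((-1:ℤ))^(((1:ZMod 2) * f x + Algebra.trace (ZMod 2) F (b * x)).val)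
      = walsh2 F f b := by
    intro b
    rw [walsh2]
    exact Finset.sum_congr rfl (fun x _ => by rw [one_mul])
  have hW0 : ∀ b : F, b ≠ 0 →
      ∑ x : F, ((-1:ℤ))^(((0:ZMod 2) * f x + Algebra.trace (ZMod 2) F (b * x)).val) = 0 := by
    intro b hb
    rw [← KAux.sum_char b hb]
    exact Finset.sum_congr rfl (fun x _ => by rw [zero_mul, zero_add])
  have hW00 : ∑ x : F, ((-1:ℤ))^(((0:ZMod 2) * f x + Algebra.trace (ZMod 2) F ((0:F) * x)).val)
      = (2^m : ℤ) := by
    have hz : ∀ x : F, (0:ZMod 2) * f x + Algebra.trace (ZMod 2) F ((0:F) * x) = 0 := by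
      intro x; simp
    rw [Finset.sum_congr rfl (fun x _ => by rw [hz x])]
    simp [ZMod.val_zero, hcard]
  have hv0 : ((0:ZMod 2)).val = 0 := rfl
  have hv1 : ((1:ZMod 2)).val = 1 := rfl
  have hcast : ((Fintype.card F : ℕ) : ℤ) = (2:ℤ)^m := by exact_mod_cast hcard
  -- the individual weights
  have hwt00 : wtH (Pmap F f (0, 0, 0)) = 0 := by
    apply KAux.wt_eq_of
    rw [hsum, hW00, hcast, hv0]
    ring
  have hwt01 : wtH (Pmap F f (0, 0, 1)) = 2^m := by
    apply KAux.wt_eq_of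
    rw [hsum, hW00, hcast, hv1]
    push_cast
    ring
  have hwt0b : ∀ b : F, b ≠ 0 → ∀ c, wtH (Pmap F f (0, b, c)) = 2^(m-1) := by
    intro b hb c
    apply KAux.wt_eq_of
    rw [hsum, hW0 b hb, hcast]
    push_cast
    linarith [Z1]
  have hwt1z : ∀ b : F, walsh2 F f b = 0 → ∀ c, wtH (Pmap F f (1, b, c)) = 2^(m-1) := by
    intro b hb c
    apply KAux.wt_eq_of
    rw [hsum, hW1, hb, hcast]
    push_cast
    linarith [Z1]
  have hwt1p : ∀ (b : F) (c : ZMod 2), (-1)^(c.val) * walsh2 F f b = 2^k →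
      wtH (Pmap F f (1, b, c)) = 2^(m-1) - 2^(k-1) := by
    intro b c hc
    apply KAux.wt_eq_of
    rw [hsum, hW1, hc, hcast]
    push_cast [Nat.cast_sub E3.le]
    linarith [Z1, Z2]
  have hwt1m : ∀ (b : F) (c : ZMod 2), (-1)^(c.val) * walsh2 F f b = -2^k →
      wtH (Pmap F f (1, b, c)) = 2^(m-1) + 2^(k-1) := by
    intro b c hc
    apply KAux.wt_eq_of
    rw [hsum, hW1, hc, hcast]
    push_cast
    linarith [Z1, Z2]
  -- master case analysis
  have hwcases := KAux.walsh_cases hpl hk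
  have hmaster : ∀ p : ZMod 2 × F × ZMod 2,
      (p = (0, 0, 0) ∧ wtH (Pmap F f p) = 0) ∨
      (p = (0, 0, 1) ∧ wtH (Pmap F f p) = 2^m) ∨
      (p.1 = 0 ∧ p.2.1 ≠ 0 ∧ wtH (Pmap F f p) = 2^(m-1)) ∨
      (p.1 = 1 ∧ walsh2 F f p.2.1 = 0 ∧ wtH (Pmap F f p) = 2^(m-1)) ∨
      (p.1 = 1 ∧ walsh2 F f p.2.1 ≠ 0 ∧
        p.2.2 = (if walsh2 F f p.2.1 = 2^k then (0:ZMod 2) else 1) ∧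
        wtH (Pmap F f p) = 2^(m-1) - 2^(k-1)) ∨
      (p.1 = 1 ∧ walsh2 F f p.2.1 ≠ 0 ∧
        p.2.2 = (if walsh2 F f p.2.1 = 2^k then (1:ZMod 2) else 0) ∧
        wtH (Pmap F f p) = 2^(m-1) + 2^(k-1)) := by
    rintro ⟨a, b, c⟩
    rcases KAux.zmod2_cases a with rfl | rfl
    · by_cases hb : b = 0
      · subst hb
        rcases KAux.zmod2_cases c with rfl | rfl
        · exact Or.inl ⟨rfl, hwt00⟩
        · exact Or.inr (Or.inl ⟨rfl, hwt01⟩)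
      · exact Or.inr (Or.inr (Or.inl ⟨rfl, hb, hwt0b b hb c⟩))
    · rcases hwcases b with h | h | h
      · exact Or.inr (Or.inr (Or.inr (Or.inl ⟨rfl, h, hwt1z b h c⟩)))
      · have hne : walsh2 F f b ≠ 0 := by rw [h]; exact Zk
        rcases KAux.zmod2_cases c with rfl | rfl
        · refine Or.inr (Or.inr (Or.inr (Or.inr (Or.inl ⟨rfl, hne, ?_, ?_⟩))))
          · rw [if_pos h]
          · exact hwt1p b 0 (by rw [h, hv0]; ring)
        · refine Or.inr (Or.inr (Or.inr (Or.inr (Or.inr ⟨rfl, hne, ?_, ?_⟩))))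
          · rw [if_pos h]
          · exact hwt1m b 1 (by rw [h, hv1]; ring)
      · have hne : walsh2 F f b ≠ 0 := by rw [h]; simpa using Zk
        have hneq : walsh2 F f b ≠ 2^k := by
          rw [h]; intro hcon
          have : (2:ℤ)^k = 0 := by linarith
          exact Zk this
        rcases KAux.zmod2_cases c with rfl | rfl
        · refine Or.inr (Or.inr (Or.inr (Or.inr (Or.inr ⟨rfl, hne, ?_, ?_⟩))))
          · rw [if_neg hneq]
          · exact hwt1m b 0 (by rw [h, hv0]; ring)
        · refine Or.inr (Or.inr (Or.inr (Or.inr (Or.inl ⟨rfl, hne, ?_, ?_⟩))))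
          · rw [if_neg hneq]
          · exact hwt1p b 1 (by rw [h, hv1]; ring)
  -- counting
  have hcount : ∀ w : ℕ, Set.ncard {v ∈ codeCbar 2 F f | wtH v = w} = (Qset F f w).card := by
    intro w
    have him : {v ∈ codeCbar 2 F f | wtH v = w} = Pmap F f '' ↑(Qset F f w) := by
      ext v
      simp only [Set.mem_sep_iff, hrange, Set.mem_range, Set.mem_image, Finset.mem_coe,
        mem_Qset]
      constructor
      · rintro ⟨⟨p, rfl⟩, hw⟩; exact ⟨p, hw, rfl⟩
      · rintro ⟨p, hw, rfl⟩; exact ⟨⟨p, rfl⟩, hw⟩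
    rw [him, Set.ncard_image_of_injective _ hinj, Set.ncard_coe_finset]
  set B : Finset F := Finset.univ.filter (fun b => walsh2 F f b ≠ 0) with hBdef
  have hB : B.card = 2^(m-s) := by
    have hP := KAux.parseval f
    rw [hcast] at hP
    have hsplit : ∑ b : F, (walsh2 F f b)^2 = ∑ b ∈ B, ((2:ℤ))^(m+s) := by
      rw [← Finset.sum_filter_add_sum_filter_not Finset.univ (fun b => walsh2 F f b ≠ 0)]
      have h1 : ∑ b ∈ Finset.univ.filter (fun b => ¬ walsh2 F f b ≠ 0), (walsh2 F f b)^2 = 0 :=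
        Finset.sum_eq_zero (fun b hb => by
          have := (Finset.mem_filter.mp hb).2
          push_neg at this
          rw [this]; ring)
      have h2 : ∑ b ∈ B, (walsh2 F f b)^2 = ∑ b ∈ B, ((2:ℤ))^(m+s) :=
        Finset.sum_congr rfl (fun b hb => by
          have hbne := (Finset.mem_filter.mp hb).2
          rcases hpl b with h | h
          · exact absurd (pow_eq_zero_iff (n := 2) (by norm_num) |>.mp h) hbne
          · exact h)
      rw [← hBdef, h2, h1, add_zero]
    rw [hsplit, Finset.sum_const, nsmul_eq_mul] at hP
    have hpow : ((2:ℤ)^m)^2 = (2:ℤ)^(m-s) * 2^(m+s) := by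
      rw [← pow_mul, ← pow_add]; congr 1; omega
    rw [hpow] at hP
    have hc2 := mul_right_cancel₀ (by positivity : ((2:ℤ))^(m+s) ≠ 0) hP
    exact_mod_cast hc2
  have E10 : 0 < 2^m := by positivity
  have hneg_ne : ∀ b : F, walsh2 F f b = -2^k → walsh2 F f b ≠ 2^k := by
    intro b h hcon
    rw [h] at hcon
    apply Zk
    linarith
  -- Q characterizations
  have hQ0 : Qset F f 0 = {((0:ZMod 2), (0:F), (0:ZMod 2))} := by
    have hzero : Pmap F f (0, 0, 0) = 0 := funext (fun x => by simp [Pmap, hf0])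
    ext p
    rw [mem_Qset, Finset.mem_singleton, KAux.wt0_iff, ← hzero]
    exact hinj.eq_iff
  have hQtop : Qset F f (2^m) = {((0:ZMod 2), (0:F), (1:ZMod 2))} := by
    ext p
    rw [mem_Qset, Finset.mem_singleton]
    constructor
    · intro hw
      rcases hmaster p with ⟨hp, hv⟩ | ⟨hp, hv⟩ | ⟨_, _, hv⟩ | ⟨_, _, hv⟩ |
        ⟨_, _, _, hv⟩ | ⟨_, _, _, hv⟩
      · omega
      · exact hp
      · omega
      · omega
      · omega
      · omega
    · rintro rfl; exact hwt01
  have hQw0 : Qset F f (2^(m-1) - 2^(k-1))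
      = B.image (fun b => ((1:ZMod 2), b, if walsh2 F f b = 2^k then (0:ZMod 2) else 1)) := by
    ext p
    rw [mem_Qset, Finset.mem_image]
    constructor
    · intro hw
      rcases hmaster p with ⟨hp, hv⟩ | ⟨hp, hv⟩ | ⟨_, _, hv⟩ | ⟨_, _, hv⟩ |
        ⟨h1, h2, h3, hv⟩ | ⟨_, _, _, hv⟩
      · omega
      · omega
      · omega
      · omega
      · refine ⟨p.2.1, Finset.mem_filter.mpr ⟨Finset.mem_univ _, h2⟩, ?_⟩
        obtain ⟨a, b, c⟩ := p
        simp only at h1 h3 ⊢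
        rw [h1, h3]
      · omega
    · rintro ⟨b', hb', rfl⟩
      have hbne := (Finset.mem_filter.mp hb').2
      rcases hwcases b' with h | h | h
      · exact absurd h hbne
      · rw [if_pos h]
        exact hwt1p b' 0 (by rw [h, hv0]; ring)
      · rw [if_neg (hneg_ne b' h)]
        exact hwt1p b' 1 (by rw [h, hv1]; ring)
  have hQw2 : Qset F f (2^(m-1) + 2^(k-1))
      = B.image (fun b => ((1:ZMod 2), b, if walsh2 F f b = 2^k then (1:ZMod 2) else 0)) := by
    ext p
    rw [mem_Qset, Finset.mem_image]
    constructor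
    · intro hw
      rcases hmaster p with ⟨hp, hv⟩ | ⟨hp, hv⟩ | ⟨_, _, hv⟩ | ⟨_, _, hv⟩ |
        ⟨_, _, _, hv⟩ | ⟨h1, h2, h3, hv⟩
      · omega
      · omega
      · omega
      · omega
      · omega
      · refine ⟨p.2.1, Finset.mem_filter.mpr ⟨Finset.mem_univ _, h2⟩, ?_⟩
        obtain ⟨a, b, c⟩ := p
        simp only at h1 h3 ⊢
        rw [h1, h3]
    · rintro ⟨b', hb', rfl⟩
      have hbne := (Finset.mem_filter.mp hb').2
      rcases hwcases b' with h | h | h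
      · exact absurd h hbne
      · rw [if_pos h]
        exact hwt1m b' 1 (by rw [h, hv1]; ring)
      · rw [if_neg (hneg_ne b' h)]
        exact hwt1m b' 0 (by rw [h, hv0]; ring)
  have himgcard : ∀ g : F → ZMod 2,
      (B.image (fun b => ((1:ZMod 2), b, g b))).card = 2^(m-s) := by
    intro g
    rw [Finset.card_image_of_injective _ (fun b b' h => by
      simpa using congrArg (fun p : ZMod 2 × F × ZMod 2 => p.2.1) h), hB]
  have cQ0 : (Qset F f 0).card = 1 := by rw [hQ0]; rfl
  have cQtop : (Qset F f (2^m)).card = 1 := by rw [hQtop]; rfl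
  have cQw0 : (Qset F f (2^(m-1) - 2^(k-1))).card = 2^(m-s) := by
    rw [hQw0, himgcard]
  have cQw2 : (Qset F f (2^(m-1) + 2^(k-1))).card = 2^(m-s) := by
    rw [hQw2, himgcard]
  have htot : (Finset.univ : Finset (ZMod 2 × F × ZMod 2)).card = 2^(m+2) := by
    rw [Finset.card_univ, Fintype.card_prod, Fintype.card_prod, hcard, ZMod.card]
    omega
  have hdisjQ : ∀ w w' : ℕ, w ≠ w' → Disjoint (Qset F f w) (Qset F f w') := by
    intro w w' hne
    rw [Finset.disjoint_left]
    intro p hp hp'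
    rw [mem_Qset] at hp hp'
    exact hne (hp.symm.trans hp')
  have cQmid : (Qset F f (2^(m-1))).card = 2^(m+2) - 2^(m-s+1) - 2 := by
    have huniv : (Finset.univ : Finset (ZMod 2 × F × ZMod 2))
        = Qset F f 0 ∪ Qset F f (2^(m-1) - 2^(k-1)) ∪ Qset F f (2^(m-1))
          ∪ Qset F f (2^(m-1) + 2^(k-1)) ∪ Qset F f (2^m) := by
      ext p
      simp only [Finset.mem_univ, true_iff, Finset.mem_union, mem_Qset]
      rcases hmaster p with ⟨_, hv⟩ | ⟨_, hv⟩ | ⟨_, _, hv⟩ | ⟨_, _, hv⟩ |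
        ⟨_, _, _, hv⟩ | ⟨_, _, _, hv⟩
      · exact Or.inl (Or.inl (Or.inl (Or.inl hv)))
      · exact Or.inr hv
      · exact Or.inl (Or.inl (Or.inr hv))
      · exact Or.inl (Or.inl (Or.inr hv))
      · exact Or.inl (Or.inl (Or.inl (Or.inr hv)))
      · exact Or.inl (Or.inr hv)
    have d1 : Disjoint (Qset F f 0) (Qset F f (2^(m-1) - 2^(k-1))) := hdisjQ _ _ (by omega)
    have d2 : Disjoint (Qset F f 0 ∪ Qset F f (2^(m-1) - 2^(k-1))) (Qset F f (2^(m-1))) := by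
      rw [Finset.disjoint_union_left]
      exact ⟨hdisjQ _ _ (by omega), hdisjQ _ _ (by omega)⟩
    have d3 : Disjoint (Qset F f 0 ∪ Qset F f (2^(m-1) - 2^(k-1)) ∪ Qset F f (2^(m-1)))
        (Qset F f (2^(m-1) + 2^(k-1))) := by
      rw [Finset.disjoint_union_left, Finset.disjoint_union_left]
      exact ⟨⟨hdisjQ _ _ (by omega), hdisjQ _ _ (by omega)⟩, hdisjQ _ _ (by omega)⟩
    have d4 : Disjoint (Qset F f 0 ∪ Qset F f (2^(m-1) - 2^(k-1)) ∪ Qset F f (2^(m-1))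
        ∪ Qset F f (2^(m-1) + 2^(k-1))) (Qset F f (2^m)) := by
      rw [Finset.disjoint_union_left, Finset.disjoint_union_left, Finset.disjoint_union_left]
      exact ⟨⟨⟨hdisjQ _ _ (by omega), hdisjQ _ _ (by omega)⟩, hdisjQ _ _ (by omega)⟩,
        hdisjQ _ _ (by omega)⟩
    have hcards := congrArg Finset.card huniv
    rw [Finset.card_union_of_disjoint d4, Finset.card_union_of_disjoint d3,
      Finset.card_union_of_disjoint d2, Finset.card_union_of_disjoint d1,
      htot, cQ0, cQtop, cQw0, cQw2] at hcards
    omega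
  -- assemble
  refine ⟨?_, ⟨?_, ?_⟩, ?_, ?_, ?_, ?_⟩
  · rw [hrange, ← Set.image_univ, Set.ncard_image_of_injective _ hinj, Set.ncard_univ,
      Nat.card_eq_fintype_card]
    rw [Fintype.card_prod, Fintype.card_prod, hcard, ZMod.card]
    omega
  · -- existence of minimum weight codeword
    obtain ⟨b, hb⟩ := Finset.card_pos.mp (by rw [hB]; exact E6)
    have hbne := (Finset.mem_filter.mp hb).2
    have key : ∃ c : ZMod 2, (-1:ℤ)^(c.val) * walsh2 F f b = 2^k := by
      rcases hwcases b with h | h | h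
      · exact absurd h hbne
      · exact ⟨0, by rw [h, hv0]; ring⟩
      · exact ⟨1, by rw [h, hv1]; ring⟩
    obtain ⟨c, hc⟩ := key
    refine ⟨Pmap F f (1, b, c), by rw [hrange]; exact ⟨_, rfl⟩, ?_, hwt1p b c hc⟩
    intro hveq
    have hv := hwt1p b c hc
    rw [(KAux.wt0_iff _).mpr hveq] at hv
    omega
  · -- minimality
    intro v hv hvne
    rw [hrange] at hv
    obtain ⟨p, rfl⟩ := hv
    rcases hmaster p with ⟨_, hw⟩ | ⟨_, hw⟩ | ⟨_, _, hw⟩ | ⟨_, _, hw⟩ |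
      ⟨_, _, _, hw⟩ | ⟨_, _, _, hw⟩
    · exact absurd ((KAux.wt0_iff _).mp hw) hvne
    · omega
    · omega
    · omega
    · omega
    · omega
  · rw [hcount, cQw0]
  · rw [hcount, cQw2]
  · rw [hcount, cQmid]
  · rw [hcount, cQtop]
end
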